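/- arXiv:1508.00219 — 9 statements merged into one kernel-verified Lean document; each statement's English description precedes it below -/
import Mathlib

section
/- Let 0 < y1 < y2 and set K = (1−e^{−λ y1})^{α1+α3}·(1−e^{−λ y2})^{α2}. Then the mixed second partial derivative ∂²/∂y1 ∂y2 of the function (y1, y2) ↦ C(θ·(1−e^{−λ y1})^{α1+α3}·(1−e^{−λ y2})^{α2}) / C(θ) equals f1(y1, y2) = (θ / C(θ)) · f_GE(y1; α1+α3, λ) · f_GE(y2; α2, λ) · [ θ K · C''(θ K) + C'(θ K) ], where C' and C'' denote the first and second derivatives of C. -/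
open Real Filter

/-- The generalized exponential pdf `f_GE(x; α, λ) = α λ e^{-λx} (1-e^{-λx})^{α-1}`. -/
noncomputable def fGE (x α lam : ℝ) : ℝ :=
  α * lam * Real.exp (-lam * x) * (1 - Real.exp (-lam * x)) ^ (α - 1)

lemma hasDerivAt_base_pow {lam α t : ℝ} (hlam : 0 < lam) (ht : 0 < t) :
    HasDerivAt (fun s : ℝ => (1 - Real.exp (-lam * s)) ^ α) (fGE t α lam) t := by
  have h1 : HasDerivAt (fun s : ℝ => -lam * s) (-lam) t := by
    simpa using (hasDerivAt_id t).const_mul (-lam)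
  have h2 : HasDerivAt (fun s : ℝ => 1 - Real.exp (-lam * s))
      (lam * Real.exp (-lam * t)) t := by
    have := (h1.exp).const_sub 1
    exact this.congr_deriv (by ring)
  have hpos : 0 < 1 - Real.exp (-lam * t) := by
    have : Real.exp (-lam * t) < 1 := by
      rw [Real.exp_lt_one_iff]
      nlinarith
    linarith
  have h3 := (Real.hasDerivAt_rpow_const (x := 1 - Real.exp (-lam * t)) (p := α)
      (Or.inl hpos.ne')).comp t h2
  exact h3.congr_deriv (by simp only [fGE]; ring)

lemma analytic_of_series {a : ℕ → ℝ} {r : ℝ} (hr : 0 < r)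
    (hs : Summable fun n : ℕ => |a (n + 1)| * r ^ (n + 1))
    {C : ℝ → ℝ} (hC : ∀ x : ℝ, C x = ∑' n : ℕ, a (n + 1) * x ^ (n + 1)) :
    AnalyticOnNhd ℝ C (Metric.ball (0:ℝ) r) := by
  set c : ℕ → ℝ := fun n => if n = 0 then 0 else a n with hcdef
  set p := FormalMultilinearSeries.ofScalars ℝ c with hp
  have hFP : HasFPowerSeriesOnBall C p 0 (ENNReal.ofReal r) := by
    constructor
    · -- radius
      apply le_trans _ (p.le_radius_of_summable_norm (r := r.toNNReal) ?_)
      · simp [ENNReal.ofReal]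
      · have : Summable fun n : ℕ => |c (n + 1)| * r ^ (n + 1) := by
          apply hs.congr
          intro n
          simp [hcdef]
        have h2 : Summable fun n : ℕ => |c n| * r ^ n :=
          (summable_nat_add_iff 1).mp this
        apply h2.congr
        intro n
        rw [hp, FormalMultilinearSeries.ofScalars_norm, Real.norm_eq_abs,
          Real.coe_toNNReal _ hr.le]
    · exact ENNReal.ofReal_pos.mpr hr
    · intro y hy
      rw [Metric.emetric_ball, Metric.mem_ball, dist_zero_right, Real.norm_eq_abs] at hy
      have hsf : Summable fun n : ℕ => a (n + 1) * y ^ (n + 1) := by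
        apply Summable.of_norm_bounded hs
        intro n
        rw [norm_mul, Real.norm_eq_abs, Real.norm_eq_abs, abs_pow]
        have : |y| ^ (n + 1) ≤ r ^ (n + 1) := pow_le_pow_left₀ (abs_nonneg y) hy.le _
        exact mul_le_mul_of_nonneg_left this (abs_nonneg _)
      have hS : HasSum (fun n : ℕ => c (n + 1) * y ^ (n + 1)) (C y) := by
        rw [hC y]
        exact hsf.hasSum.congr_fun fun n => by simp [hcdef]
      have hS' : HasSum (fun n : ℕ => c (n + 1) * y ^ (n + 1))
          (C y - ∑ i ∈ Finset.range 1, c i * y ^ i) := by simpa [hcdef] using hS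
      have := (hasSum_nat_add_iff' (f := fun n : ℕ => c n * y ^ n) 1).mp hS'
      have hfun : (fun n : ℕ => p n fun _ => y) = fun n : ℕ => c n * y ^ n := by
        funext n
        rw [hp, FormalMultilinearSeries.ofScalars_apply_eq, smul_eq_mul]
      rw [zero_add, hfun]
      exact this
  have := hFP.analyticOnNhd
  rwa [Metric.emetric_ball] at this

/-- The absolutely continuous part `f1` of the BGEPS density on `{y1 < y2}` is the mixed
second partial derivative of the cdf:
`∂²/∂y1∂y2 [C(θ (1-e^{-λ y1})^{α1+α3} (1-e^{-λ y2})^{α2}) / C(θ)]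
  = (θ/C(θ)) f_GE(y1; α1+α3, λ) f_GE(y2; α2, λ) (θ K C''(θK) + C'(θK))`. -/
theorem stmt_3 (a : ℕ → ℝ) (ha : ∀ n, 0 ≤ a n) (hne : ∃ n : ℕ, 0 < a (n + 1))
    (θ : ℝ) (hθ : 0 < θ)
    (hrad : ∃ r : ℝ, θ < r ∧ Summable fun n : ℕ => |a (n + 1)| * r ^ (n + 1))
    (C : ℝ → ℝ) (hC : ∀ x : ℝ, C x = ∑' n : ℕ, a (n + 1) * x ^ (n + 1))
    (hCθ : 0 < C θ)
    (α1 α2 α3 lam : ℝ) (hα1 : 0 < α1) (hα2 : 0 < α2) (hα3 : 0 < α3) (hlam : 0 < lam)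
    (y1 y2 : ℝ) (hy1 : 0 < y1) (h12 : y1 < y2)
    (K : ℝ) (hK : K = (1 - Real.exp (-lam * y1)) ^ (α1 + α3) * (1 - Real.exp (-lam * y2)) ^ α2) :
    deriv (fun t1 : ℝ =>
        deriv (fun t2 : ℝ =>
            C (θ * (1 - Real.exp (-lam * t1)) ^ (α1 + α3) * (1 - Real.exp (-lam * t2)) ^ α2) /
              C θ) y2) y1 =
      θ / C θ * fGE y1 (α1 + α3) lam * fGE y2 α2 lam *
        (θ * K * deriv (deriv C) (θ * K) + deriv C (θ * K)) := by
  obtain ⟨r, hr, hsum⟩ := hrad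
  have hr0 : 0 < r := hθ.trans hr
  have hAn : AnalyticOnNhd ℝ C (Metric.ball (0:ℝ) r) := analytic_of_series hr0 hsum hC
  have hAn' : AnalyticOnNhd ℝ (deriv C) (Metric.ball (0:ℝ) r) := hAn.deriv
  have hD1 : ∀ x : ℝ, |x| < r → HasDerivAt C (deriv C x) x := fun x hx =>
    ((hAn x (mem_ball_zero_iff.mpr (by rwa [Real.norm_eq_abs]))).differentiableAt).hasDerivAt
  have hD2 : ∀ x : ℝ, |x| < r → HasDerivAt (deriv C) (deriv (deriv C) x) x := fun x hx =>
    ((hAn' x (mem_ball_zero_iff.mpr (by rwa [Real.norm_eq_abs]))).differentiableAt).hasDerivAt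
  have hA : 0 < α1 + α3 := add_pos hα1 hα3
  have hy2 : 0 < y2 := hy1.trans h12
  have hgmem : ∀ t : ℝ, 0 < t → ∀ α : ℝ, 0 < α →
      0 < (1 - Real.exp (-lam * t)) ^ α ∧ (1 - Real.exp (-lam * t)) ^ α < 1 := by
    intro t ht α hα
    have h0 : 0 < 1 - Real.exp (-lam * t) := by
      have : Real.exp (-lam * t) < 1 := by rw [Real.exp_lt_one_iff]; nlinarith
      linarith
    have h1 : 1 - Real.exp (-lam * t) < 1 := by
      have := Real.exp_pos (-lam * t); linarith
    exact ⟨Real.rpow_pos_of_pos h0 α, Real.rpow_lt_one h0.le h1 hα⟩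
  have hz : ∀ t1 t2 : ℝ, 0 < t1 → 0 < t2 →
      |θ * (1 - Real.exp (-lam * t1)) ^ (α1 + α3) * (1 - Real.exp (-lam * t2)) ^ α2| < r := by
    intro t1 t2 h1 h2
    obtain ⟨p1, q1⟩ := hgmem t1 h1 (α1 + α3) hA
    obtain ⟨p2, q2⟩ := hgmem t2 h2 α2 hα2
    rw [abs_of_pos (by positivity)]
    have h11 : (1 - Real.exp (-lam * t1)) ^ (α1 + α3) * (1 - Real.exp (-lam * t2)) ^ α2 < 1 := by
      nlinarith
    nlinarith
  have key : ∀ t1 : ℝ, 0 < t1 →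
      deriv (fun t2 : ℝ =>
          C (θ * (1 - Real.exp (-lam * t1)) ^ (α1 + α3) * (1 - Real.exp (-lam * t2)) ^ α2) /
            C θ) y2
        = deriv C (θ * (1 - Real.exp (-lam * t1)) ^ (α1 + α3) *
              (1 - Real.exp (-lam * y2)) ^ α2) *
            (θ * (1 - Real.exp (-lam * t1)) ^ (α1 + α3) * fGE y2 α2 lam) / C θ := by
    intro t1 ht1
    have h2 : HasDerivAt (fun t2 : ℝ =>
        θ * (1 - Real.exp (-lam * t1)) ^ (α1 + α3) * (1 - Real.exp (-lam * t2)) ^ α2)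
        (θ * (1 - Real.exp (-lam * t1)) ^ (α1 + α3) * fGE y2 α2 lam) y2 :=
      (hasDerivAt_base_pow hlam hy2).const_mul _
    have hcomp := (((hD1 _ (hz t1 y2 ht1 hy2)).comp y2 h2).div_const (C θ))
    exact hcomp.deriv
  have heq : (fun t1 : ℝ => deriv (fun t2 : ℝ =>
          C (θ * (1 - Real.exp (-lam * t1)) ^ (α1 + α3) * (1 - Real.exp (-lam * t2)) ^ α2) /
            C θ) y2)
      =ᶠ[nhds y1] fun t1 : ℝ =>
          deriv C (θ * (1 - Real.exp (-lam * t1)) ^ (α1 + α3) *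
              (1 - Real.exp (-lam * y2)) ^ α2) *
            (θ * (1 - Real.exp (-lam * t1)) ^ (α1 + α3) * fGE y2 α2 lam) / C θ := by
    filter_upwards [Ioi_mem_nhds hy1] with t ht using key t ht
  rw [heq.deriv_eq]
  have h1 : HasDerivAt (fun t1 : ℝ => (1 - Real.exp (-lam * t1)) ^ (α1 + α3))
      (fGE y1 (α1 + α3) lam) y1 := hasDerivAt_base_pow hlam hy1
  have hzK : |θ * K| < r := by
    have := hz y1 y2 hy1 hy2
    rwa [hK, ← mul_assoc]
  have hKeq : θ * (1 - Real.exp (-lam * y1)) ^ (α1 + α3) *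
      (1 - Real.exp (-lam * y2)) ^ α2 = θ * K := by rw [hK]; ring
  have hz1 : HasDerivAt (fun t1 : ℝ => θ * (1 - Real.exp (-lam * t1)) ^ (α1 + α3) *
      (1 - Real.exp (-lam * y2)) ^ α2)
      (θ * fGE y1 (α1 + α3) lam * (1 - Real.exp (-lam * y2)) ^ α2) y1 :=
    (h1.const_mul θ).mul_const _
  have hDC : HasDerivAt (fun t1 : ℝ => deriv C (θ * (1 - Real.exp (-lam * t1)) ^ (α1 + α3) *
      (1 - Real.exp (-lam * y2)) ^ α2))
      (deriv (deriv C) (θ * K) * (θ * fGE y1 (α1 + α3) lam *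
        (1 - Real.exp (-lam * y2)) ^ α2)) y1 := by
    have h := hD2 (θ * K) hzK
    have h' : HasDerivAt (deriv C) (deriv (deriv C) (θ * K))
        (θ * (1 - Real.exp (-lam * y1)) ^ (α1 + α3) * (1 - Real.exp (-lam * y2)) ^ α2) := by
      rw [hKeq]; exact h
    exact h'.comp y1 hz1
  have hz2 : HasDerivAt (fun t1 : ℝ => θ * (1 - Real.exp (-lam * t1)) ^ (α1 + α3) *
      fGE y2 α2 lam) (θ * fGE y1 (α1 + α3) lam * fGE y2 α2 lam) y1 :=
    (h1.const_mul θ).mul_const _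
  have hfinal := (hDC.mul hz2).div_const (C θ)
  simp only [Pi.mul_apply] at hfinal
  rw [hfinal.deriv, hKeq, hK]
  field_simp
end

section
/- Let y1, y2 > 0 and set K = (1−e^{−λ y1})^{α1+α3}·(1−e^{−λ y2})^{α2}. Then (θ / C(θ)) · f_GE(y1; α1+α3, λ) · f_GE(y2; α2, λ) · [ θ K · C''(θ K) + C'(θ K) ] = Σ_{n=1}^∞ (a_n θ^n / C(θ)) · f_GE(y1; n(α1+α3), λ) · f_GE(y2; n α2, λ), where the series on the right converges. -/
open Real Filter

private lemma aux_summable_sq (b : ℕ → ℝ) (hb : ∀ n, 0 ≤ b n) {r ρ : ℝ}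
    (hρ : 0 < ρ) (hρr : ρ < r)
    (hsum : Summable fun n : ℕ => |b n| * r ^ (n + 1)) :
    Summable fun n : ℕ => ((n : ℝ) + 1) ^ 2 * b n * ρ ^ n := by
  have hr : 0 < r := hρ.trans hρr
  set q : ℝ := ρ / r with hq
  have hq0 : 0 ≤ q := le_of_lt (div_pos hρ hr)
  have hq1 : q < 1 := (div_lt_one hr).2 hρr
  set M := ∑' n : ℕ, |b n| * r ^ (n + 1) with hM
  have hle : ∀ n : ℕ, b n * r ^ (n + 1) ≤ M := by
    intro n
    have := Summable.le_tsum hsum n (fun i _ => by positivity)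
    rwa [abs_of_nonneg (hb n)] at this
  have hgeom : Summable fun n : ℕ => ((n : ℝ) + 1) ^ 2 * q ^ n := by
    have h : ‖q‖ < 1 := by rwa [Real.norm_eq_abs, abs_of_nonneg hq0]
    have h2 := summable_pow_mul_geometric_of_norm_lt_one (R := ℝ) 2 h
    have h1' := summable_pow_mul_geometric_of_norm_lt_one (R := ℝ) 1 h
    have h0' := summable_pow_mul_geometric_of_norm_lt_one (R := ℝ) 0 h
    refine ((h2.add (h1'.mul_left 2)).add h0').congr fun n => ?_
    simp; ring
  refine Summable.of_nonneg_of_le (fun n => by have := hb n; positivity)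
    (fun n => ?_) (hgeom.mul_right (M / r))
  have hρn : ρ ^ n = q ^ n * r ^ n := by
    rw [hq, div_pow, div_mul_cancel₀]
    positivity
  rw [hρn]
  have h1 : ((n : ℝ) + 1) ^ 2 * b n * (q ^ n * r ^ n)
      = ((n : ℝ) + 1) ^ 2 * q ^ n * ((b n * r ^ (n + 1)) / r) := by
    field_simp
    ring
  rw [h1]
  have h2 : (b n * r ^ (n + 1)) / r ≤ M / r := by
    exact div_le_div_of_nonneg_right (hle n) hr.le
  exact mul_le_mul_of_nonneg_left h2 (by positivity)

private lemma aux_hasSum_deriv (b : ℕ → ℝ) (hb : ∀ n, 0 ≤ b n) {r ρ x0 : ℝ}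
    (hρ : 0 < ρ) (hρr : ρ < r)
    (hsum : Summable fun n : ℕ => |b n| * r ^ (n + 1))
    (C : ℝ → ℝ) (hC : ∀ x : ℝ, C x = ∑' n : ℕ, b n * x ^ (n + 1))
    (hx0 : x0 ∈ Set.Ioo (-ρ) ρ) :
    HasSum (fun n : ℕ => b n * ((n : ℝ) + 1) ^ 2 * x0 ^ n)
      (x0 * deriv (deriv C) x0 + deriv C x0) := by
  set s : Set ℝ := Set.Ioo (-ρ) ρ with hs_def
  have hs : IsOpen s := isOpen_Ioo
  have h's : IsPreconnected s := isPreconnected_Ioo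
  have h0s : (0 : ℝ) ∈ s := ⟨neg_lt_zero.2 hρ, hρ⟩
  have hxρ : ∀ x ∈ s, |x| ≤ ρ := fun x hx => (abs_lt.2 ⟨hx.1, hx.2⟩).le
  -- summable bounds
  have hu : Summable fun n : ℕ => b n * ((n : ℝ) + 1) ^ 2 * ρ ^ n :=
    (aux_summable_sq b hb hρ hρr hsum).congr fun n => by ring
  have hv : Summable fun n : ℕ => b n * ((n : ℝ) + 1) ^ 2 * ρ ^ n / ρ := hu.div_const ρ
  -- the functions and their derivatives
  set g' : ℕ → ℝ → ℝ := fun n x => b n * (((n : ℝ) + 1) * x ^ n) with hg'_def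
  set g'' : ℕ → ℝ → ℝ := fun n x => b n * (((n : ℝ) + 1) * ((n : ℝ) * x ^ (n - 1))) with hg''_def
  have hg : ∀ (n : ℕ) (x : ℝ), HasDerivAt (fun z => b n * z ^ (n + 1)) (g' n x) x := by
    intro n x
    have h := (hasDerivAt_pow (n + 1) x).const_mul (b n)
    simpa [hg'_def, mul_assoc] using h
  have hg2 : ∀ (n : ℕ) (x : ℝ), HasDerivAt (g' n) (g'' n x) x := by
    intro n x
    have h := (hasDerivAt_pow n x).const_mul (b n * ((n : ℝ) + 1))
    simpa [hg'_def, hg''_def, mul_assoc] using h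
  -- bounds
  have hg'b : ∀ (n : ℕ), ∀ x ∈ s, ‖g' n x‖ ≤ b n * ((n : ℝ) + 1) ^ 2 * ρ ^ n := by
    intro n x hx
    have hxn : |x| ^ n ≤ ρ ^ n := pow_le_pow_left₀ (abs_nonneg x) (hxρ x hx) n
    have hn1 : ((n : ℝ) + 1) ≤ ((n : ℝ) + 1) ^ 2 := by nlinarith [Nat.cast_nonneg (α := ℝ) n]
    calc ‖g' n x‖ = b n * (((n : ℝ) + 1) * |x| ^ n) := by
          rw [hg'_def]; simp [Real.norm_eq_abs, abs_mul, abs_of_nonneg (hb n), abs_pow,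
            abs_of_nonneg (by positivity : (0:ℝ) ≤ (n : ℝ) + 1)]
      _ ≤ b n * (((n : ℝ) + 1) ^ 2 * ρ ^ n) := by
          apply mul_le_mul_of_nonneg_left _ (hb n)
          exact mul_le_mul hn1 hxn (by positivity) (by positivity)
      _ = b n * ((n : ℝ) + 1) ^ 2 * ρ ^ n := by ring
  have hg''b : ∀ (n : ℕ), ∀ x ∈ s, ‖g'' n x‖ ≤ b n * ((n : ℝ) + 1) ^ 2 * ρ ^ n / ρ := by
    intro n x hx
    cases n with
    | zero => have := hb 0; simp [hg''_def]; positivity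
    | succ m =>
      have hxn : |x| ^ m ≤ ρ ^ m := pow_le_pow_left₀ (abs_nonneg x) (hxρ x hx) m
      have hρ' : ρ ^ (m + 1) / ρ = ρ ^ m := by
        rw [pow_succ, mul_div_assoc, div_self hρ.ne', mul_one]
      have key : ((m : ℝ) + 1 + 1) * (((m : ℝ) + 1) * |x| ^ m)
          ≤ ((m : ℝ) + 1 + 1) ^ 2 * ρ ^ m := by
        have h1 : ((m : ℝ) + 1) ≤ ((m : ℝ) + 1 + 1) := by linarith
        nlinarith [Nat.cast_nonneg (α := ℝ) m, pow_nonneg (abs_nonneg x) m,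
          pow_nonneg hρ.le m, mul_le_mul h1 hxn (by positivity) (by positivity : (0:ℝ) ≤ (m:ℝ)+1+1)]
      calc ‖g'' (m + 1) x‖
          = b (m + 1) * (((m : ℝ) + 1 + 1) * (((m : ℝ) + 1) * |x| ^ m)) := by
            rw [hg''_def]; simp [Real.norm_eq_abs, abs_mul, abs_of_nonneg (hb (m + 1)), abs_pow,
              abs_of_nonneg (by positivity : (0:ℝ) ≤ (m : ℝ) + 1 + 1),
              abs_of_nonneg (by positivity : (0:ℝ) ≤ (m : ℝ) + 1)]
        _ ≤ b (m + 1) * (((m : ℝ) + 1 + 1) ^ 2 * ρ ^ m) :=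
            mul_le_mul_of_nonneg_left key (hb (m + 1))
        _ = b (m + 1) * ((m : ℝ) + 1 + 1) ^ 2 * ρ ^ (m + 1) / ρ := by
            rw [mul_div_assoc, hρ']; ring
        _ = b (m + 1) * (((m + 1 : ℕ) : ℝ) + 1) ^ 2 * ρ ^ (m + 1) / ρ := by push_cast; ring
  -- first derivative of C on s
  have hCfun : C = fun z => ∑' n : ℕ, b n * z ^ (n + 1) := funext hC
  have hg0 : Summable fun n : ℕ => b n * (0 : ℝ) ^ (n + 1) := by
    simpa using (summable_zero : Summable fun _ : ℕ => (0:ℝ))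
  have hD1 : ∀ x ∈ s, HasDerivAt C (∑' n : ℕ, g' n x) x := by
    intro x hx
    rw [hCfun]
    exact hasDerivAt_tsum_of_isPreconnected hu hs h's (fun n y _ => hg n y) hg'b h0s hg0 hx
  have hderivC : Set.EqOn (deriv C) (fun x => ∑' n : ℕ, g' n x) s := fun x hx => (hD1 x hx).deriv
  -- second derivative at x0
  have hg'0 : Summable fun n : ℕ => g' n 0 :=
    Summable.of_norm_bounded hu fun n => hg'b n 0 h0s
  have hD2 : HasDerivAt (fun z => ∑' n : ℕ, g' n z) (∑' n : ℕ, g'' n x0) x0 :=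
    hasDerivAt_tsum_of_isPreconnected hv hs h's (fun n y _ => hg2 n y) hg''b h0s hg'0 hx0
  have heq : deriv C =ᶠ[nhds x0] fun x => ∑' n : ℕ, g' n x :=
    Filter.eventuallyEq_of_mem (hs.mem_nhds hx0) hderivC
  have hD2' : HasDerivAt (deriv C) (∑' n : ℕ, g'' n x0) x0 := hD2.congr_of_eventuallyEq heq
  -- summability at x0
  have hS1 : Summable fun n : ℕ => g' n x0 :=
    Summable.of_norm_bounded hu fun n => hg'b n x0 hx0
  have hS2 : Summable fun n : ℕ => g'' n x0 :=
    Summable.of_norm_bounded hv fun n => hg''b n x0 hx0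
  have hH1 : HasSum (fun n : ℕ => g' n x0) (deriv C x0) := by
    rw [(hD1 x0 hx0).deriv]; exact hS1.hasSum
  have hH2 : HasSum (fun n : ℕ => g'' n x0) (deriv (deriv C) x0) := by
    rw [hD2'.deriv]; exact hS2.hasSum
  have hfin := (hH2.mul_left x0).add hH1
  have hterm : (fun n : ℕ => b n * ((n : ℝ) + 1) ^ 2 * x0 ^ n)
      = fun n : ℕ => x0 * g'' n x0 + g' n x0 := by
    funext n
    cases n with
    | zero => simp [hg'_def, hg''_def]
    | succ m =>
      simp only [hg'_def, hg''_def, Nat.add_sub_cancel]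
      push_cast
      rw [pow_succ]
      ring
  rw [hterm]
  exact hfin

private lemma aux_rpow (u α : ℝ) (hu : 0 < u) (n : ℕ) :
    u ^ (((n : ℝ) + 1) * α - 1) = u ^ (α - 1) * (u ^ α) ^ n := by
  have h1 : ((n : ℝ) + 1) * α - 1 = (α - 1) + α * n := by ring
  rw [h1, Real.rpow_add hu, Real.rpow_mul hu.le, Real.rpow_natCast]

/-- Series representation of the density `f1`:
`(θ/C(θ)) f_GE(y1; α1+α3, λ) f_GE(y2; α2, λ) (θ K C''(θK) + C'(θK))
  = Σ_{n≥1} (a_n θ^n / C(θ)) f_GE(y1; n(α1+α3), λ) f_GE(y2; n α2, λ)`. -/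
theorem stmt_5 (a : ℕ → ℝ) (ha : ∀ n, 0 ≤ a n) (hne : ∃ n : ℕ, 0 < a (n + 1))
    (θ : ℝ) (hθ : 0 < θ)
    (hrad : ∃ r : ℝ, θ < r ∧ Summable fun n : ℕ => |a (n + 1)| * r ^ (n + 1))
    (C : ℝ → ℝ) (hC : ∀ x : ℝ, C x = ∑' n : ℕ, a (n + 1) * x ^ (n + 1))
    (hCθ : 0 < C θ)
    (α1 α2 α3 lam : ℝ) (hα1 : 0 < α1) (hα2 : 0 < α2) (hα3 : 0 < α3) (hlam : 0 < lam)
    (y1 y2 : ℝ) (hy1 : 0 < y1) (hy2 : 0 < y2)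
    (K : ℝ) (hK : K = (1 - Real.exp (-lam * y1)) ^ (α1 + α3) * (1 - Real.exp (-lam * y2)) ^ α2) :
    HasSum
      (fun n : ℕ =>
        a (n + 1) * θ ^ (n + 1) / C θ *
          fGE y1 (((n : ℝ) + 1) * (α1 + α3)) lam * fGE y2 (((n : ℝ) + 1) * α2) lam)
      (θ / C θ * fGE y1 (α1 + α3) lam * fGE y2 α2 lam *
        (θ * K * deriv (deriv C) (θ * K) + deriv C (θ * K))) := by
  obtain ⟨r, hθr, hsum⟩ := hrad
  set ρ : ℝ := (θ + r) / 2 with hρ_def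
  have hr : 0 < r := hθ.trans hθr
  have hρ : 0 < ρ := by rw [hρ_def]; positivity
  have hθρ : θ < ρ := by rw [hρ_def]; linarith
  have hρr : ρ < r := by rw [hρ_def]; linarith
  -- basic positivity facts
  have hE1 : Real.exp (-lam * y1) < 1 := Real.exp_lt_one_iff.2 (by nlinarith)
  have hE2 : Real.exp (-lam * y2) < 1 := Real.exp_lt_one_iff.2 (by nlinarith)
  have hu1 : 0 < 1 - Real.exp (-lam * y1) := by linarith
  have hu2 : 0 < 1 - Real.exp (-lam * y2) := by linarith
  have hu1' : 1 - Real.exp (-lam * y1) < 1 := by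
    have := Real.exp_pos (-lam * y1); linarith
  have hu2' : 1 - Real.exp (-lam * y2) < 1 := by
    have := Real.exp_pos (-lam * y2); linarith
  have hβ : 0 < α1 + α3 := by linarith
  have hK0 : 0 < K := by
    rw [hK]
    exact mul_pos (Real.rpow_pos_of_pos hu1 _) (Real.rpow_pos_of_pos hu2 _)
  have hK1 : K < 1 := by
    rw [hK]
    have h1 : (1 - Real.exp (-lam * y1)) ^ (α1 + α3) < 1 :=
      Real.rpow_lt_one hu1.le hu1' hβ
    have h2 : (1 - Real.exp (-lam * y2)) ^ α2 < 1 :=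
      Real.rpow_lt_one hu2.le hu2' hα2
    have p1 : 0 < (1 - Real.exp (-lam * y1)) ^ (α1 + α3) := Real.rpow_pos_of_pos hu1 _
    have p2 : 0 < (1 - Real.exp (-lam * y2)) ^ α2 := Real.rpow_pos_of_pos hu2 _
    nlinarith
  have hx0 : θ * K ∈ Set.Ioo (-ρ) ρ := by
    constructor
    · nlinarith
    · calc θ * K < θ * 1 := by nlinarith
        _ = θ := mul_one θ
        _ < ρ := hθρ
  -- main power series fact
  have main := aux_hasSum_deriv (fun n => a (n + 1)) (fun n => ha _) hρ hρr hsum C hC hx0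
  have final := main.mul_left (θ / C θ * fGE y1 (α1 + α3) lam * fGE y2 α2 lam)
  have hfun : (fun n : ℕ =>
        a (n + 1) * θ ^ (n + 1) / C θ *
          fGE y1 (((n : ℝ) + 1) * (α1 + α3)) lam * fGE y2 (((n : ℝ) + 1) * α2) lam)
      = fun n : ℕ => θ / C θ * fGE y1 (α1 + α3) lam * fGE y2 α2 lam *
          (a (n + 1) * ((n : ℝ) + 1) ^ 2 * (θ * K) ^ n) := by
    funext n
    subst hK
    simp only [fGE]
    rw [aux_rpow _ _ hu1 n, aux_rpow _ _ hu2 n, mul_pow, mul_pow]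
    ring
  rw [hfun]
  exact final
end

section
/- Let y > 0 and write s = α1+α2+α3. Then (θ α3 / (C(θ) s)) · f_GE(y; s, λ) · C'(θ·(1−e^{−λ y})^s) = (α3 / s) · Σ_{n=1}^∞ (a_n θ^n / C(θ)) · f_GE(y; n s, λ), where the series on the right converges. (Series representation of the singular part f0 of the BGEPS density.) -/
open Real Filter

/-- Series representation of the singular part `f0` of the BGEPS density: with
`s = α1+α2+α3`, for `y > 0`,
`(θ α3/(C(θ) s)) f_GE(y; s, λ) C'(θ (1-e^{-λ y})^s)
  = (α3/s) Σ_{n≥1} (a_n θ^n / C(θ)) f_GE(y; n s, λ)`. -/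
theorem stmt_6 (a : ℕ → ℝ) (ha : ∀ n, 0 ≤ a n) (hne : ∃ n : ℕ, 0 < a (n + 1))
    (θ : ℝ) (hθ : 0 < θ)
    (hrad : ∃ r : ℝ, θ < r ∧ Summable fun n : ℕ => |a (n + 1)| * r ^ (n + 1))
    (C : ℝ → ℝ) (hC : ∀ x : ℝ, C x = ∑' n : ℕ, a (n + 1) * x ^ (n + 1))
    (hCθ : 0 < C θ)
    (α1 α2 α3 lam : ℝ) (hα1 : 0 < α1) (hα2 : 0 < α2) (hα3 : 0 < α3) (hlam : 0 < lam)
    (y : ℝ) (hy : 0 < y)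
    (s : ℝ) (hs : s = α1 + α2 + α3) :
    HasSum
      (fun n : ℕ =>
        α3 / s * (a (n + 1) * θ ^ (n + 1) / C θ * fGE y (((n : ℝ) + 1) * s) lam))
      (θ * α3 / (C θ * s) * fGE y s lam * deriv C (θ * (1 - Real.exp (-lam * y)) ^ s)) := by
  obtain ⟨r, hθr, hsum⟩ := hrad
  have hr : 0 < r := hθ.trans hθr
  set t : ℝ := 1 - Real.exp (-lam * y) with htdef
  have hE1 : Real.exp (-lam * y) < 1 := by
    rw [Real.exp_lt_one_iff]; nlinarith
  have ht0 : 0 < t := by simp only [htdef]; linarith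
  have ht1 : t < 1 := by
    have := Real.exp_pos (-lam * y); simp only [htdef]; linarith
  have hs0 : 0 < s := by rw [hs]; linarith
  have hts0 : 0 < t ^ s := Real.rpow_pos_of_pos ht0 s
  have hts1 : t ^ s < 1 := Real.rpow_lt_one ht0.le ht1 hs0
  set x0 : ℝ := θ * t ^ s with hx0def
  have hx00 : 0 < x0 := mul_pos hθ hts0
  have hx0θ : x0 < θ := by
    have : θ * t ^ s < θ * 1 := by
      exact mul_lt_mul_of_pos_left hts1 hθ
    simpa [hx0def] using this
  -- summable bound on derivatives
  set T : ℝ := ∑' n : ℕ, |a (n + 1)| * r ^ (n + 1) with hTdef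
  have hterm_le : ∀ n : ℕ, |a (n + 1)| * r ^ (n + 1) ≤ T := by
    intro n
    exact Summable.le_tsum hsum n fun m _ => by positivity
  set u : ℕ → ℝ := fun n => ((n : ℝ) + 1) * |a (n + 1)| * θ ^ n with hudef
  have hq : ‖θ / r‖ < 1 := by
    rw [Real.norm_eq_abs, abs_of_pos (by positivity)]
    rw [div_lt_one hr]; exact hθr
  have hv : Summable fun n : ℕ => ((n : ℝ) + 1) * (θ / r) ^ n := by
    have h1 := summable_pow_mul_geometric_of_norm_lt_one 1 hq
    have h2 := summable_geometric_of_norm_lt_one hq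
    have := h1.add h2
    refine this.congr fun n => by push_cast; ring
  have hu : Summable u := by
    refine Summable.of_nonneg_of_le (fun n => by positivity)
      (fun n => ?_) ((hv.mul_left (T / r)))
    have hb : |a (n + 1)| ≤ T / r ^ (n + 1) := by
      rw [le_div_iff₀ (by positivity)]
      exact hterm_le n
    have h1 : u n ≤ ((n : ℝ) + 1) * (T / r ^ (n + 1)) * θ ^ n := by
      have hn : (0:ℝ) ≤ ((n : ℝ) + 1) := by positivity
      exact mul_le_mul_of_nonneg_right (mul_le_mul_of_nonneg_left hb hn) (by positivity)
    have h2 : ((n : ℝ) + 1) * (T / r ^ (n + 1)) * θ ^ n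
        = T / r * (((n : ℝ) + 1) * (θ / r) ^ n) := by
      rw [div_pow]
      field_simp
      ring
    linarith
  -- the series and its termwise derivative
  set g : ℕ → ℝ → ℝ := fun n z => a (n + 1) * z ^ (n + 1) with hgdef
  set g' : ℕ → ℝ → ℝ := fun n z => ((n : ℝ) + 1) * a (n + 1) * z ^ n with hg'def
  have hgderiv : ∀ (n : ℕ) (x : ℝ), HasDerivAt (g n) (g' n x) x := by
    intro n x
    have h := (hasDerivAt_pow (n + 1) x).const_mul (a (n + 1))
    simp only [Nat.add_sub_cancel, Nat.cast_add, Nat.cast_one] at h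
    refine h.congr_deriv ?_
    ring
  have hg'bound : ∀ (n : ℕ) (x : ℝ), x ∈ Metric.ball (0:ℝ) θ → ‖g' n x‖ ≤ u n := by
    intro n x hx
    rw [Metric.mem_ball, Real.dist_eq, sub_zero] at hx
    simp only [hg'def, Real.norm_eq_abs, abs_mul, hudef]
    have h1 : |x| ^ n ≤ θ ^ n := pow_le_pow_left₀ (abs_nonneg x) hx.le n
    rw [abs_pow]
    have h2 : |((n : ℝ) + 1)| = (n : ℝ) + 1 := abs_of_pos (by positivity)
    rw [h2]
    exact mul_le_mul_of_nonneg_left h1 (by positivity)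
  have hg0 : Summable fun n => g n 0 := by
    refine summable_zero.congr fun n => ?_
    simp [hgdef]
  have hball : IsPreconnected (Metric.ball (0:ℝ) θ) := (convex_ball 0 θ).isPreconnected
  have hx0mem : x0 ∈ Metric.ball (0:ℝ) θ := by
    rw [Metric.mem_ball, Real.dist_eq, sub_zero, abs_of_pos hx00]; exact hx0θ
  have h0mem : (0:ℝ) ∈ Metric.ball (0:ℝ) θ := by
    simpa [Metric.mem_ball] using hθ
  have hD : HasDerivAt (fun z => ∑' n, g n z) (∑' n, g' n x0) x0 :=
    hasDerivAt_tsum_of_isPreconnected hu Metric.isOpen_ball hball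
      (fun n z _ => hgderiv n z) (fun n z hz => hg'bound n z hz) h0mem hg0 hx0mem
  have hCderiv : deriv C x0 = ∑' n, g' n x0 := by
    have : C = fun z => ∑' n, g n z := funext hC
    rw [this]
    exact hD.deriv
  have hsum' : Summable fun n => g' n x0 :=
    Summable.of_norm_bounded hu fun n => hg'bound n x0 hx0mem
  set c : ℝ := θ * α3 / (C θ * s) * fGE y s lam with hcdef
  have key : HasSum (fun n => c * g' n x0) (c * ∑' n, g' n x0) :=
    hsum'.hasSum.mul_left c
  have hfun : (fun n : ℕ =>
      α3 / s * (a (n + 1) * θ ^ (n + 1) / C θ * fGE y (((n : ℝ) + 1) * s) lam))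
      = fun n => c * g' n x0 := by
    funext n
    simp only [hcdef, hg'def, hx0def, fGE, mul_pow]
    have hpow : t ^ ((((n : ℝ) + 1) * s) - 1) = t ^ (s - 1) * (t ^ s) ^ n := by
      rw [← Real.rpow_natCast (t ^ s) n, ← Real.rpow_mul ht0.le, ← Real.rpow_add ht0]
      congr 1
      ring
    rw [hpow]
    rw [← htdef]
    field_simp
    ring
  rw [hCderiv]
  exact hfun ▸ key
end

section
/- Write s = α1+α2+α3 and define f0(y) = (θ α3 / (C(θ) s)) · f_GE(y; s, λ) · C'(θ·(1−e^{−λ y})^s) for y > 0. Then ∫_0^∞ f0(y) dy = α3 / (α1+α2+α3). (The singular part of the BGEPS distribution carries total mass α3/(α1+α2+α3).) -/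
open Real Filter MeasureTheory

/-- The singular part of the BGEPS distribution carries total mass `α3/(α1+α2+α3)`:
with `s = α1+α2+α3`,
`∫_0^∞ (θ α3/(C(θ) s)) f_GE(y; s, λ) C'(θ (1-e^{-λ y})^s) dy = α3/(α1+α2+α3)`. -/
theorem stmt_9 (a : ℕ → ℝ) (ha : ∀ n, 0 ≤ a n) (hne : ∃ n : ℕ, 0 < a (n + 1))
    (θ : ℝ) (hθ : 0 < θ)
    (hrad : ∃ r : ℝ, θ < r ∧ Summable fun n : ℕ => |a (n + 1)| * r ^ (n + 1))
    (C : ℝ → ℝ) (hC : ∀ x : ℝ, C x = ∑' n : ℕ, a (n + 1) * x ^ (n + 1))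
    (hCθ : 0 < C θ)
    (α1 α2 α3 lam : ℝ) (hα1 : 0 < α1) (hα2 : 0 < α2) (hα3 : 0 < α3) (hlam : 0 < lam)
    (s : ℝ) (hs : s = α1 + α2 + α3) :
    ∫ y in Set.Ioi (0 : ℝ),
        θ * α3 / (C θ * s) * fGE y s lam * deriv C (θ * (1 - Real.exp (-lam * y)) ^ s) =
      α3 / (α1 + α2 + α3) := by
  obtain ⟨r, hθr, hrsum⟩ := hrad
  have hs0 : 0 < s := by rw [hs]; linarith
  obtain ⟨r', hθr', hr'r⟩ : ∃ r', θ < r' ∧ r' < r := ⟨(θ + r) / 2, by linarith, by linarith⟩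
  have hr'pos : 0 < r' := hθ.trans hθr'
  have hrpos : 0 < r := hr'pos.trans hr'r
  obtain ⟨B, hB⟩ : ∃ B : ℝ, ∀ n : ℕ, |a (n + 1)| * r ^ (n + 1) ≤ B := by
    obtain ⟨B, hB⟩ := hrsum.tendsto_atTop_zero.bddAbove_range
    exact ⟨B, fun n => hB ⟨n, rfl⟩⟩
  have hq : |r' / r| < 1 := by
    rw [abs_of_pos (div_pos hr'pos hrpos), div_lt_one hrpos]; exact hr'r
  have hgeo : Summable (fun n : ℕ => ((n : ℝ) + 1) * (r' / r) ^ n) := by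
    have h1 := summable_pow_mul_geometric_of_norm_lt_one (R := ℝ) 1
      (by rwa [Real.norm_eq_abs])
    have h2 := summable_geometric_of_lt_one (r := r' / r) (by positivity)
      (by rw [abs_of_pos (div_pos hr'pos hrpos)] at hq; exact hq)
    refine (h1.add h2).congr fun n => ?_
    push_cast; ring
  have hu : Summable (fun n : ℕ => ((n : ℝ) + 1) * |a (n + 1)| * r' ^ n) := by
    refine Summable.of_nonneg_of_le (fun n => by positivity)
      (fun n => ?_) (hgeo.mul_left (B / r))
    have key : ((n : ℝ) + 1) * |a (n + 1)| * r' ^ n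
        = (|a (n + 1)| * r ^ (n + 1)) * (((n : ℝ) + 1) * (r' / r) ^ n) / r := by
      have h : (r' / r) ^ n * r ^ n = r' ^ n := by
        rw [div_pow, div_mul_cancel₀ _ (pow_ne_zero n hrpos.ne')]
      rw [eq_div_iff hrpos.ne', ← h]; ring
    rw [key, div_le_iff₀ hrpos]
    have h1 : (0:ℝ) ≤ ((n : ℝ) + 1) * (r' / r) ^ n := by positivity
    calc (|a (n + 1)| * r ^ (n + 1)) * (((n : ℝ) + 1) * (r' / r) ^ n)
        ≤ B * (((n : ℝ) + 1) * (r' / r) ^ n) := mul_le_mul_of_nonneg_right (hB n) h1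
      _ = B / r * (((n : ℝ) + 1) * (r' / r) ^ n) * r := by
          field_simp
  -- derivative of C inside the disc
  have hCder : ∀ x ∈ Set.Ioo (-r') r',
      HasDerivAt C (∑' n : ℕ, ((n : ℝ) + 1) * a (n + 1) * x ^ n) x := by
    intro x hx
    have hCfun : C = fun y : ℝ => ∑' n : ℕ, a (n + 1) * y ^ (n + 1) := funext hC
    rw [hCfun]
    refine hasDerivAt_tsum_of_isPreconnected
      (u := fun n : ℕ => ((n : ℝ) + 1) * |a (n + 1)| * r' ^ n)
      (g := fun (n : ℕ) (y : ℝ) => a (n + 1) * y ^ (n + 1))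
      (g' := fun (n : ℕ) (y : ℝ) => ((n : ℝ) + 1) * a (n + 1) * y ^ n)
      hu isOpen_Ioo isPreconnected_Ioo (fun n y _ => ?_) (fun n y hy => ?_)
      (Set.mem_Ioo.2 ⟨by linarith, hr'pos⟩) ?_ hx
    · have h := (hasDerivAt_pow (n + 1) y).const_mul (a (n + 1))
      refine h.congr_deriv ?_
      push_cast [Nat.add_sub_cancel]; ring
    · have hyabs : |y| ≤ r' := le_of_lt (abs_lt.2 ⟨hy.1, hy.2⟩)
      have heq : ‖((n : ℝ) + 1) * a (n + 1) * y ^ n‖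
          = ((n : ℝ) + 1) * |a (n + 1)| * |y| ^ n := by
        rw [norm_mul, norm_mul, Real.norm_eq_abs, Real.norm_eq_abs, Real.norm_eq_abs,
          abs_pow, abs_of_nonneg (by positivity : (0:ℝ) ≤ (n : ℝ) + 1)]
      rw [heq]
      exact mul_le_mul_of_nonneg_left (pow_le_pow_left₀ (abs_nonneg y) hyabs n)
        (by positivity)
    · refine summable_zero.congr fun n => ?_
      simp
  have hCdiff : ∀ x ∈ Set.Ioo (-r') r', DifferentiableAt ℝ C x :=
    fun x hx => (hCder x hx).differentiableAt
  have hCderiv_nonneg : ∀ x, 0 ≤ x → x < r' → 0 ≤ deriv C x := by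
    intro x hx0 hxr
    rw [(hCder x ⟨by linarith, hxr⟩).deriv]
    exact tsum_nonneg fun n =>
      mul_nonneg (mul_nonneg (by positivity) (ha _)) (pow_nonneg hx0 n)
  -- the inner function and the composite
  set w : ℝ → ℝ := fun y => 1 - Real.exp (-lam * y) with hw
  set u : ℝ → ℝ := fun y => θ * w y ^ s with hud
  set g : ℝ → ℝ := fun y => C (u y) with hgd
  set g' : ℝ → ℝ := fun y =>
    deriv C (u y) * (θ * (s * w y ^ (s - 1) * (lam * Real.exp (-lam * y)))) with hg'd
  have hwderiv : ∀ y : ℝ, HasDerivAt w (lam * Real.exp (-lam * y)) y := by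
    intro y
    have h1 : HasDerivAt (fun y : ℝ => -lam * y) (-lam) y := by
      simpa using (hasDerivAt_id y).const_mul (-lam)
    have h3 := h1.exp.const_sub 1
    rw [hw]
    refine h3.congr_deriv ?_; ring
  have hwpos : ∀ y ∈ Set.Ioi (0:ℝ), 0 < w y ∧ w y < 1 := by
    intro y hy
    have hy0 : (0:ℝ) < y := hy
    have he1 : Real.exp (-lam * y) < 1 := by
      rw [Real.exp_lt_one_iff]
      nlinarith
    have he0 : 0 < Real.exp (-lam * y) := Real.exp_pos _
    constructor
    · simp only [hw]; linarith
    · simp only [hw]; linarith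
  have humem : ∀ y ∈ Set.Ioi (0:ℝ), u y ∈ Set.Ioo (-r') r' ∧ 0 ≤ u y := by
    intro y hy
    obtain ⟨hw0, hw1⟩ := hwpos y hy
    have hws : w y ^ s ≤ 1 := Real.rpow_le_one hw0.le hw1.le hs0.le
    have hws0 : 0 ≤ w y ^ s := Real.rpow_nonneg hw0.le s
    have huy : u y = θ * w y ^ s := by rw [hud]
    have hu0 : 0 ≤ u y := by rw [huy]; exact mul_nonneg hθ.le hws0
    have huθ : u y ≤ θ := by rw [huy]; nlinarith
    exact ⟨⟨by linarith, by linarith⟩, hu0⟩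
  have hgderiv : ∀ y ∈ Set.Ioi (0:ℝ), HasDerivAt g (g' y) y := by
    intro y hy
    obtain ⟨hw0, _⟩ := hwpos y hy
    have huder : HasDerivAt u (θ * (s * w y ^ (s - 1) * (lam * Real.exp (-lam * y)))) y := by
      have h := ((hwderiv y).rpow_const (p := s) (Or.inl hw0.ne')).const_mul θ
      rw [hud]
      refine h.congr_deriv ?_; ring
    have hCd : HasDerivAt C (deriv C (u y)) (u y) :=
      (hCdiff _ (humem y hy).1).hasDerivAt
    rw [hgd, hg'd]
    exact hCd.comp y huder
  have hg'nonneg : ∀ y ∈ Set.Ioi (0:ℝ), 0 ≤ g' y := by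
    intro y hy
    obtain ⟨hmem, h0⟩ := humem y hy
    obtain ⟨hw0, _⟩ := hwpos y hy
    have h1 := hCderiv_nonneg (u y) h0 hmem.2
    have h2 : (0:ℝ) ≤ w y ^ (s - 1) := Real.rpow_nonneg hw0.le _
    have h3 : (0:ℝ) < Real.exp (-lam * y) := Real.exp_pos _
    rw [hg'd]
    positivity
  have hu0 : u 0 = 0 := by
    rw [hud]
    simp [hw, Real.zero_rpow hs0.ne']
  have hg0 : g 0 = 0 := by
    have hC0 : C 0 = 0 := by rw [hC 0]; simp
    rw [hgd]
    simp only [hu0, hC0]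
  have hcont0 : ContinuousWithinAt g (Set.Ici 0) 0 := by
    have hwc : ContinuousAt w 0 := by
      rw [hw]
      exact (continuous_const.sub
        (Real.continuous_exp.comp (continuous_const.mul continuous_id))).continuousAt
    have hrc : ContinuousAt (fun x : ℝ => x ^ s) (w 0) :=
      Real.continuousAt_rpow_const _ _ (Or.inr hs0.le)
    have huc : ContinuousAt u 0 := by
      rw [hud]
      exact continuousAt_const.mul (hrc.comp hwc)
    have hCc : ContinuousAt C (u 0) := by
      rw [hu0]
      exact (hCdiff 0 ⟨by linarith, hr'pos⟩).continuousAt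
    rw [hgd]
    exact (hCc.comp huc).continuousWithinAt
  have hgtop : Tendsto g atTop (nhds (C θ)) := by
    have h1 : Tendsto (fun y : ℝ => -lam * y) atTop atBot :=
      Filter.Tendsto.const_mul_atTop_of_neg (neg_lt_zero.2 hlam) tendsto_id
    have h2 : Tendsto (fun y : ℝ => Real.exp (-lam * y)) atTop (nhds 0) :=
      Real.tendsto_exp_atBot.comp h1
    have h3 : Tendsto w atTop (nhds 1) := by
      have := (tendsto_const_nhds (α := ℝ) (f := atTop) (x := (1:ℝ))).sub h2
      rw [hw]
      simpa using this
    have h4 : Tendsto (fun y : ℝ => w y ^ s) atTop (nhds (1:ℝ)) := by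
      have hc : ContinuousAt (fun x : ℝ => x ^ s) 1 :=
        Real.continuousAt_rpow_const _ _ (Or.inl one_ne_zero)
      have := hc.tendsto.comp h3
      simpa [Function.comp_def, Real.one_rpow] using this
    have h5 : Tendsto u atTop (nhds θ) := by
      have := (tendsto_const_nhds (α := ℝ) (f := atTop) (x := θ)).mul h4
      rw [hud]
      simpa using this
    have hCc : ContinuousAt C θ :=
      (hCdiff θ ⟨by linarith, hθr'⟩).continuousAt
    rw [hgd]
    exact hCc.tendsto.comp h5
  have key := integral_Ioi_of_hasDerivAt_of_nonneg hcont0 hgderiv hg'nonneg hgtop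
  rw [hg0, sub_zero] at key
  have hint : ∫ y in Set.Ioi (0:ℝ),
      θ * α3 / (C θ * s) * fGE y s lam * deriv C (θ * (1 - Real.exp (-lam * y)) ^ s)
      = ∫ y in Set.Ioi (0:ℝ), α3 / (C θ * s) * g' y := by
    refine setIntegral_congr_fun measurableSet_Ioi (fun y hy => ?_)
    rw [hg'd]
    simp only [hud, hw, fGE]
    ring
  rw [hint, integral_const_mul, key, hs]
  have h1 : C θ ≠ 0 := ne_of_gt hCθ
  have h2 : α1 + α2 + α3 ≠ 0 := by positivity
  field_simp
end

section
/- For y1, y2 > 0 set K1(y1,y2) = (1−e^{−λ y1})^{α1+α3}·(1−e^{−λ y2})^{α2} and f1(y1, y2) = (θ / C(θ)) · f_GE(y1; α1+α3, λ) · f_GE(y2; α2, λ) · [ θ K1 · C''(θ K1) + C'(θ K1) ]. Then the double integral of f1 over the region { (y1, y2) : 0 < y1 < y2 } equals α2 / (α1+α2+α3). (This is the probability P(Y1 < Y2) under the BGEPS distribution.) -/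
open Real Filter MeasureTheory

/-- `K1(y1,y2) = (1-e^{-λ y1})^{α1+α3} (1-e^{-λ y2})^{α2}`. -/
noncomputable def K1 (α1 α3 α2 lam y1 y2 : ℝ) : ℝ :=
  (1 - Real.exp (-lam * y1)) ^ (α1 + α3) * (1 - Real.exp (-lam * y2)) ^ α2


open Set Topology





lemma E_pos {lam y : ℝ} (hlam : 0 < lam) (hy : 0 < y) : 0 < 1 - Real.exp (-lam * y) := by
  have : Real.exp (-lam * y) < 1 := by
    apply Real.exp_lt_one_iff.2; nlinarith
  linarith

lemma E_lt_one {lam y : ℝ} : 1 - Real.exp (-lam * y) < 1 := by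
  have := Real.exp_pos (-lam * y); linarith

lemma hasDerivAt_E_rpow {lam c y : ℝ} (hy : 0 < 1 - Real.exp (-lam * y)) :
    HasDerivAt (fun t => (1 - Real.exp (-lam * t)) ^ c)
      (c * lam * Real.exp (-lam * y) * (1 - Real.exp (-lam * y)) ^ (c - 1)) y := by
  have h1 : HasDerivAt (fun t : ℝ => -lam * t) (-lam) y := by
    simpa using (hasDerivAt_id y).const_mul (-lam)
  have h2 : HasDerivAt (fun t => Real.exp (-lam * t)) (Real.exp (-lam * y) * (-lam)) y :=
    (Real.hasDerivAt_exp _).comp y h1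
  have h3 : HasDerivAt (fun t => 1 - Real.exp (-lam * t)) (lam * Real.exp (-lam * y)) y := by
    have := h2.const_sub 1
    refine this.congr_deriv ?_
    ring
  have h4 := (Real.hasDerivAt_rpow_const (p := c) (Or.inl hy.ne')).comp y h3
  refine h4.congr_deriv ?_
  ring

lemma E_tendsto {lam : ℝ} (hlam : 0 < lam) :
    Tendsto (fun y => 1 - Real.exp (-lam * y)) atTop (𝓝 1) := by
  have h1 : Tendsto (fun y : ℝ => -lam * y) atTop atBot := by
    have := (tendsto_id (α := ℝ)).const_mul_atTop hlam
    have h2 := tendsto_neg_atTop_atBot.comp this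
    convert h2 using 1
    funext y; simp [neg_mul]
  have h2 : Tendsto (fun y => Real.exp (-lam * y)) atTop (𝓝 0) :=
    Real.tendsto_exp_atBot.comp h1
  simpa using tendsto_const_nhds.sub h2

lemma E_rpow_tendsto {lam c : ℝ} (hlam : 0 < lam) :
    Tendsto (fun y => (1 - Real.exp (-lam * y)) ^ c) atTop (𝓝 1) := by
  have := (Real.continuousAt_rpow_const 1 c (Or.inl one_ne_zero)).tendsto.comp (E_tendsto hlam)
  simpa [Real.one_rpow, Function.comp_def] using this

lemma intGE {lam : ℝ} (hlam : 0 < lam) {α b : ℝ} (hα : 0 < α) (hb : 0 ≤ b) :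
    IntegrableOn (fun y => fGE y α lam * (1 - Real.exp (-lam * y)) ^ b) (Ioi (0:ℝ)) ∧
    ∫ y in Ioi (0:ℝ), fGE y α lam * (1 - Real.exp (-lam * y)) ^ b = α / (α + b) := by
  have hc : 0 < α + b := by linarith
  set G := fun y => α / (α + b) * (1 - Real.exp (-lam * y)) ^ (α + b) with hG
  have hderiv : ∀ y ∈ Ioi (0:ℝ), HasDerivAt G (fGE y α lam * (1 - Real.exp (-lam * y)) ^ b) y := by
    intro y hy
    have hE := E_pos hlam hy
    have h1 := (hasDerivAt_E_rpow (c := α + b) hE).const_mul (α / (α + b))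
    refine h1.congr_deriv (Eq.symm ?_)
    show fGE y α lam * _ = _
    rw [fGE, mul_assoc, ← Real.rpow_add hE]
    rw [show α - 1 + b = α + b - 1 by ring]
    field_simp
  have hpos : ∀ y ∈ Ioi (0:ℝ), 0 ≤ fGE y α lam * (1 - Real.exp (-lam * y)) ^ b := by
    intro y hy
    have hE := E_pos hlam hy
    rw [fGE]
    have := Real.exp_pos (-lam * y)
    positivity
  have hcont : ContinuousWithinAt G (Ici 0) 0 := by
    apply ContinuousAt.continuousWithinAt
    have hca : ContinuousAt (fun y => (1 - Real.exp (-lam * y)) ^ (α + b)) 0 :=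
      (Real.continuousAt_rpow_const _ _ (Or.inr hc.le)).comp
        (continuous_const.sub ((Real.continuous_exp).comp
          (continuous_const.mul continuous_id))).continuousAt
    exact hca.const_mul _
  have htend : Tendsto G atTop (𝓝 (α / (α + b))) := by
    have := (E_rpow_tendsto (c := α + b) hlam).const_mul (α / (α + b))
    simpa only [mul_one] using this
  have hG0 : G 0 = 0 := by
    simp [hG, Real.zero_rpow hc.ne']
  constructor
  · exact integrableOn_Ioi_deriv_of_nonneg hcont hderiv hpos htend
  · rw [integral_Ioi_of_hasDerivAt_of_nonneg hcont hderiv hpos htend, hG0, sub_zero]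

lemma intGE_tail {lam : ℝ} (hlam : 0 < lam) {b t : ℝ} (hb : 0 < b) (ht : 0 < t) :
    IntegrableOn (fun y => fGE y b lam) (Ioi t) ∧
    ∫ y in Ioi t, fGE y b lam = 1 - (1 - Real.exp (-lam * t)) ^ b := by
  set G := fun y => (1 - Real.exp (-lam * y)) ^ b with hG
  have hderiv : ∀ y ∈ Ici t, HasDerivAt G (fGE y b lam) y := by
    intro y hy
    have hE := E_pos hlam (lt_of_lt_of_le ht hy)
    exact hasDerivAt_E_rpow hE
  have hpos : ∀ y ∈ Ioi t, 0 ≤ fGE y b lam := by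
    intro y hy
    have hE := E_pos hlam (ht.trans hy)
    rw [fGE]
    have := Real.exp_pos (-lam * y)
    positivity
  have htend : Tendsto G atTop (𝓝 1) := E_rpow_tendsto hlam
  constructor
  · exact integrableOn_Ioi_deriv_of_nonneg' hderiv hpos htend
  · rw [integral_Ioi_of_hasDerivAt_of_nonneg' hderiv hpos htend]







lemma fGE_nonneg {lam x α : ℝ} (hlam : 0 < lam) (hα : 0 < α) (hx : 0 < x) :
    0 ≤ fGE x α lam := by
  have hE := E_pos hlam hx
  have := Real.exp_pos (-lam * x)
  rw [fGE]; positivity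

lemma fGE_measurable (α lam : ℝ) : Measurable (fun x => fGE x α lam) := by
  unfold fGE
  fun_prop

lemma measurableSet_S : MeasurableSet {q : ℝ × ℝ | 0 < q.1 ∧ q.1 < q.2} :=
  (measurableSet_lt measurable_const measurable_fst).inter
    (measurableSet_lt measurable_fst measurable_snd)

lemma int2d {lam : ℝ} (hlam : 0 < lam) {A B : ℝ} (hA : 0 < A) (hB : 0 < B) :
    IntegrableOn (fun p : ℝ × ℝ => fGE p.1 A lam * fGE p.2 B lam)
      {q : ℝ × ℝ | 0 < q.1 ∧ q.1 < q.2} ∧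
    ∫ p in {q : ℝ × ℝ | 0 < q.1 ∧ q.1 < q.2}, fGE p.1 A lam * fGE p.2 B lam = B / (A + B) := by
  set S := {q : ℝ × ℝ | 0 < q.1 ∧ q.1 < q.2} with hSdef
  have hS : MeasurableSet S := measurableSet_S
  set f : ℝ × ℝ → ℝ := fun p => fGE p.1 A lam * fGE p.2 B lam with hfdef
  set f' : ℝ × ℝ → ℝ := S.indicator f with hf'def
  -- factorization of the indicator
  have hind : ∀ x y : ℝ, f' (x, y) =
      (Ioi (0:ℝ)).indicator (fun t => fGE t A lam) x *
        (Ioi x).indicator (fun t => fGE t B lam) y := by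
    intro x y
    simp only [hf'def, hfdef, hSdef, indicator_apply, mem_setOf_eq, mem_Ioi]
    split_ifs <;> simp_all
  have hf'nonneg : ∀ p, 0 ≤ f' p := by
    intro p
    apply indicator_nonneg
    intro q hq
    exact mul_nonneg (fGE_nonneg hlam hA hq.1) (fGE_nonneg hlam hB (hq.1.trans hq.2))
  have hf'meas : Measurable f' :=
    ((fGE_measurable A lam).comp measurable_fst |>.mul
      ((fGE_measurable B lam).comp measurable_snd)).indicator hS
  -- inner integral
  have hinner : ∀ x : ℝ, (∫ y, f' (x, y)) =
      (Ioi (0:ℝ)).indicator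
        (fun t => fGE t A lam * (1 - (1 - Real.exp (-lam * t)) ^ B)) x := by
    intro x
    by_cases h1 : 0 < x
    · have : (fun y => f' (x, y)) =
          fun y => fGE x A lam * (Ioi x).indicator (fun t => fGE t B lam) y := by
        funext y; rw [hind x y, indicator_of_mem (mem_Ioi.2 h1)]
      rw [this, integral_const_mul, integral_indicator measurableSet_Ioi,
        (intGE_tail hlam hB h1).2, indicator_of_mem (mem_Ioi.2 h1)]
    · have : (fun y => f' (x, y)) = fun _ => (0:ℝ) := by
        funext y
        rw [hind x y, indicator_of_notMem (by simpa using h1), zero_mul]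
      rw [this, integral_zero, indicator_of_notMem (by simpa using h1)]
  -- fiberwise integrability
  have hfiber : ∀ x : ℝ, Integrable (fun y => f' (x, y)) := by
    intro x
    by_cases h1 : 0 < x
    · have : (fun y => f' (x, y)) =
          fun y => fGE x A lam * (Ioi x).indicator (fun t => fGE t B lam) y := by
        funext y; rw [hind x y, indicator_of_mem (mem_Ioi.2 h1)]
      rw [this]
      exact (((integrable_indicator_iff measurableSet_Ioi).2
        (intGE_tail hlam hB h1).1)).const_mul _
    · have : (fun y => f' (x, y)) = fun _ => (0:ℝ) := by
        funext y
        rw [hind x y, indicator_of_notMem (by simpa using h1), zero_mul]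
      rw [this]
      exact integrable_zero _ _ _
  -- integrability of the full-tail indicator bound function
  have hIA : IntegrableOn (fun t => fGE t A lam) (Ioi (0:ℝ)) := by
    have h := (intGE hlam hA le_rfl).1
    apply h.congr_fun _ measurableSet_Ioi
    intro t ht
    simp only [Real.rpow_zero, mul_one]
  have hbound : Integrable ((Ioi (0:ℝ)).indicator (fun t => fGE t A lam)) :=
    (integrable_indicator_iff measurableSet_Ioi).2 hIA
  have hIH : Integrable ((Ioi (0:ℝ)).indicator
      (fun t => fGE t A lam * (1 - (1 - Real.exp (-lam * t)) ^ B))) := by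
    apply hbound.mono'
    · apply Measurable.aestronglyMeasurable
      apply Measurable.indicator _ measurableSet_Ioi
      apply Measurable.mul (fGE_measurable A lam)
      fun_prop
    · filter_upwards with x
      rw [Real.norm_eq_abs]
      by_cases h1 : 0 < x
      · rw [indicator_of_mem (mem_Ioi.2 h1), indicator_of_mem (mem_Ioi.2 h1)]
        have hE := E_pos hlam h1
        have hE1 : (1:ℝ) - Real.exp (-lam * x) ≤ 1 := by
          have := Real.exp_pos (-lam * x); linarith
        have h2 : 0 < (1 - Real.exp (-lam * x)) ^ B := Real.rpow_pos_of_pos hE B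
        have h3 : (1 - Real.exp (-lam * x)) ^ B ≤ 1 := Real.rpow_le_one hE.le hE1 hB.le
        have h4 := fGE_nonneg hlam hA h1
        rw [abs_of_nonneg (by nlinarith)]
        nlinarith
      · rw [indicator_of_notMem (by simpa using h1), indicator_of_notMem (by simpa using h1)]
        simp
  -- integrability on the product space
  have hprod : Integrable f' (volume.prod volume) := by
    refine (integrable_prod_iff hf'meas.aestronglyMeasurable).2 ⟨ae_of_all _ hfiber, ?_⟩
    have heq : (fun x => ∫ y, ‖f' (x, y)‖) = fun x => ∫ y, f' (x, y) := by
      funext x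
      exact integral_congr_ae (ae_of_all _ fun y => Real.norm_of_nonneg (hf'nonneg _))
    rw [heq, funext hinner]
    exact hIH
  have hInt : Integrable f' := by rw [Measure.volume_eq_prod]; exact hprod
  refine ⟨(integrable_indicator_iff hS).1 hInt, ?_⟩
  have hAB : (0:ℝ) < A + B := by linarith
  calc ∫ p in S, f p = ∫ p, f' p := (integral_indicator hS).symm
    _ = ∫ x, ∫ y, f' (x, y) := by rw [Measure.volume_eq_prod]; exact integral_prod _ hprod
    _ = ∫ x, (Ioi (0:ℝ)).indicator
          (fun t => fGE t A lam * (1 - (1 - Real.exp (-lam * t)) ^ B)) x :=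
        integral_congr_ae (ae_of_all _ fun x => hinner x)
    _ = ∫ x in Ioi (0:ℝ), fGE x A lam * (1 - (1 - Real.exp (-lam * x)) ^ B) :=
        integral_indicator measurableSet_Ioi
    _ = B / (A + B) := by
        have e1 : EqOn (fun x => fGE x A lam * (1 - (1 - Real.exp (-lam * x)) ^ B))
            (fun x => fGE x A lam * (1 - Real.exp (-lam * x)) ^ (0:ℝ) -
              fGE x A lam * (1 - Real.exp (-lam * x)) ^ B) (Ioi 0) := by
          intro x hx
          simp only [Real.rpow_zero]; ring
        rw [setIntegral_congr_fun measurableSet_Ioi e1,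
          integral_sub (intGE hlam hA le_rfl).1 (intGE hlam hA hB.le).1,
          (intGE hlam hA le_rfl).2, (intGE hlam hA hB.le).2]
        field_simp
        ring

lemma summable_aux {b : ℕ → ℝ} {r s : ℝ} (hb : Summable fun n => |b n| * r ^ n)
    (h0 : 0 ≤ s) (hs : s < r) (k : ℕ) :
    Summable fun n : ℕ => (n : ℝ) ^ k * (|b n| * s ^ n) := by
  have hr : 0 < r := h0.trans_lt hs
  have hq0 : 0 ≤ s / r := div_nonneg h0 hr.le
  have hq1 : s / r < 1 := (div_lt_one hr).2 hs
  obtain ⟨M, hM⟩ := (tendsto_pow_const_mul_const_pow_of_lt_one k hq0 hq1).bddAbove_range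
  apply Summable.of_nonneg_of_le (fun n => by positivity) (fun n => ?_) (hb.mul_left M)
  have hsn : s ^ n = (s / r) ^ n * r ^ n := by
    rw [div_pow, div_mul_cancel₀]
    positivity
  calc (n:ℝ) ^ k * (|b n| * s ^ n) = ((n:ℝ) ^ k * (s/r) ^ n) * (|b n| * r ^ n) := by
        rw [hsn]; ring
    _ ≤ M * (|b n| * r ^ n) := by
        have h1 : (n:ℝ) ^ k * (s/r) ^ n ≤ M := hM (mem_range_self n)
        have h2 : (0:ℝ) ≤ |b n| * r ^ n := by positivity
        exact mul_le_mul_of_nonneg_right h1 h2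

lemma hasDerivAt_C {a : ℕ → ℝ} {r s : ℝ} (hs : 0 < s) (hsr : s < r)
    (hsum : Summable fun n => |a n| * r ^ n) {y : ℝ} (hy : y ∈ Metric.ball (0:ℝ) s) :
    HasDerivAt (fun x => ∑' n : ℕ, a (n + 1) * x ^ (n + 1))
      (∑' n : ℕ, (((n:ℝ) + 1) * a (n + 1)) * y ^ n) y := by
  set u : ℕ → ℝ := fun n => (1/s) * (((n+1 : ℕ):ℝ) ^ (1:ℕ) * (|a (n+1)| * s ^ (n+1))) with hu
  have hus : Summable u := by
    apply Summable.mul_left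
    exact (summable_nat_add_iff 1).2 (summable_aux hsum hs.le hsr 1)
  have huval : ∀ n : ℕ, u n = ((n:ℝ) + 1) * |a (n+1)| * s ^ n := by
    intro n
    rw [hu]
    push_cast
    field_simp
    ring
  apply hasDerivAt_tsum_of_isPreconnected hus Metric.isOpen_ball
    (convex_ball (0:ℝ) s).isPreconnected
    (g := fun n x => a (n+1) * x ^ (n+1))
    (g' := fun n x => (((n:ℝ) + 1) * a (n + 1)) * x ^ n)
    (y₀ := 0) ?_ ?_ (by simpa using hs) ?_ hy
  · intro n x hx
    have h := (hasDerivAt_pow (n+1) x).const_mul (a (n+1))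
    refine h.congr_deriv ?_
    push_cast
    ring
  · intro n x hx
    rw [Real.norm_eq_abs, huval n, abs_mul, abs_mul, abs_pow]
    have hxs : |x| ≤ s := by
      rw [← Real.norm_eq_abs]
      exact (mem_ball_zero_iff.1 hx).le
    have h1 : |((n:ℝ) + 1)| = (n:ℝ) + 1 := abs_of_nonneg (by positivity)
    rw [h1]
    gcongr
  · have : (fun n : ℕ => a (n+1) * (0:ℝ) ^ (n+1)) = fun _ => 0 := by
      funext n; simp
    rw [this]
    exact summable_zero

lemma hasDerivAt_D1 {a : ℕ → ℝ} {r s : ℝ} (hs : 0 < s) (hsr : s < r)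
    (hsum : Summable fun n => |a n| * r ^ n) {y : ℝ} (hy : y ∈ Metric.ball (0:ℝ) s) :
    HasDerivAt (fun x => ∑' n : ℕ, (((n:ℝ) + 1) * a (n + 1)) * x ^ n)
      (∑' n : ℕ, (((n:ℝ) + 1) * a (n + 1)) * ((n:ℝ) * y ^ (n - 1))) y := by
  set u : ℕ → ℝ := fun n => (1/s^2) * (((n+1 : ℕ):ℝ) ^ (2:ℕ) * (|a (n+1)| * s ^ (n+1))) with hu
  have hus : Summable u := by
    apply Summable.mul_left
    exact (summable_nat_add_iff 1).2 (summable_aux hsum hs.le hsr 2)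
  apply hasDerivAt_tsum_of_isPreconnected hus Metric.isOpen_ball
    (convex_ball (0:ℝ) s).isPreconnected
    (g := fun (n : ℕ) (x : ℝ) => (((n:ℝ) + 1) * a (n + 1)) * x ^ n)
    (g' := fun (n : ℕ) (x : ℝ) => (((n:ℝ) + 1) * a (n + 1)) * ((n:ℝ) * x ^ (n - 1)))
    (y₀ := 0) ?_ ?_ (by simpa using hs) ?_ hy
  · intro n x hx
    exact (hasDerivAt_pow n x).const_mul _
  · intro n x hx
    have hxs : |x| ≤ s := by
      rw [← Real.norm_eq_abs]
      exact (mem_ball_zero_iff.1 hx).le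
    have step1 : ‖(((n:ℝ) + 1) * a (n + 1)) * ((n:ℝ) * x ^ (n - 1))‖ ≤
        (((n:ℝ) + 1) * |a (n + 1)|) * ((n:ℝ) * s ^ (n - 1)) := by
      rw [Real.norm_eq_abs, abs_mul, abs_mul, abs_mul, abs_pow,
        abs_of_nonneg (by positivity : (0:ℝ) ≤ (n:ℝ) + 1),
        abs_of_nonneg (by positivity : (0:ℝ) ≤ (n:ℝ))]
      gcongr
    refine step1.trans ?_
    cases n with
    | zero =>
      simp only [Nat.cast_zero, zero_mul, mul_zero, hu]
      positivity
    | succ m =>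
      have huval : u (m+1) = (((m:ℝ)+1) + 1)^2 * |a (m+1+1)| * s ^ m := by
        rw [hu]
        push_cast
        field_simp
        ring
      rw [huval]
      have e1 : (((m+1:ℕ):ℝ) + 1) * |a (m+1+1)| * (((m+1:ℕ):ℝ) * s ^ (m+1-1)) =
          ((((m:ℝ)+1) + 1) * |a (m+1+1)|) * ((((m:ℝ)+1)) * s ^ m) := by
        push_cast
        ring
      rw [e1]
      have h2 : (0:ℝ) ≤ s ^ m := by positivity
      nlinarith [abs_nonneg (a (m+1+1)), Nat.cast_nonneg (α := ℝ) m,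
        mul_nonneg (abs_nonneg (a (m+1+1))) h2]
  · apply summable_of_ne_finset_zero (s := {0})
    intro n hn
    have : n ≠ 0 := by simpa using hn
    simp [zero_pow this]

/-- `P(Y1 < Y2) = α2/(α1+α2+α3)` under the BGEPS distribution: the double integral of
`f1(y1,y2) = (θ/C(θ)) f_GE(y1; α1+α3, λ) f_GE(y2; α2, λ) (θ K1 C''(θ K1) + C'(θ K1))`
over `{(y1,y2) : 0 < y1 < y2}` equals `α2/(α1+α2+α3)`. -/
theorem stmt_10 (a : ℕ → ℝ) (ha : ∀ n, 0 ≤ a n) (hne : ∃ n : ℕ, 0 < a (n + 1))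
    (θ : ℝ) (hθ : 0 < θ)
    (hrad : ∃ r : ℝ, θ < r ∧ Summable fun n : ℕ => |a (n + 1)| * r ^ (n + 1))
    (C : ℝ → ℝ) (hC : ∀ x : ℝ, C x = ∑' n : ℕ, a (n + 1) * x ^ (n + 1))
    (hCθ : 0 < C θ)
    (α1 α2 α3 lam : ℝ) (hα1 : 0 < α1) (hα2 : 0 < α2) (hα3 : 0 < α3) (hlam : 0 < lam) :
    ∫ p in {q : ℝ × ℝ | 0 < q.1 ∧ q.1 < q.2},
        θ / C θ * fGE p.1 (α1 + α3) lam * fGE p.2 α2 lam *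
          (θ * K1 α1 α3 α2 lam p.1 p.2 * deriv (deriv C) (θ * K1 α1 α3 α2 lam p.1 p.2) +
            deriv C (θ * K1 α1 α3 α2 lam p.1 p.2)) =
      α2 / (α1 + α2 + α3) := by
  obtain ⟨r, hθr, hsum1⟩ := hrad
  have hsum : Summable fun n : ℕ => |a n| * r ^ n :=
    (summable_nat_add_iff (f := fun n : ℕ => |a n| * r ^ n) 1).1 hsum1
  set s : ℝ := (θ + r) / 2 with hsdef
  have hs0 : 0 < s := by simp only [hsdef]; linarith
  have hθs : θ < s := by simp only [hsdef]; linarith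
  have hsr : s < r := by simp only [hsdef]; linarith
  have hA : 0 < α1 + α3 := by linarith
  have hCfun : C = fun x => ∑' n : ℕ, a (n + 1) * x ^ (n + 1) := funext hC
  set D1 : ℝ → ℝ := fun x => ∑' n : ℕ, (((n:ℝ) + 1) * a (n + 1)) * x ^ n with hD1def
  have hderivC : ∀ y ∈ Metric.ball (0:ℝ) s, deriv C y = D1 y := by
    intro y hy
    rw [hCfun]
    exact (hasDerivAt_C hs0 hsr hsum hy).deriv
  have hderiv2 : ∀ y ∈ Metric.ball (0:ℝ) s,
      deriv (deriv C) y = ∑' n : ℕ, (((n:ℝ) + 1) * a (n + 1)) * ((n:ℝ) * y ^ (n - 1)) := by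
    intro y hy
    have heq : deriv C =ᶠ[𝓝 y] D1 := by
      filter_upwards [Metric.isOpen_ball.mem_nhds hy] with z hz using hderivC z hz
    rw [heq.deriv_eq, hD1def]
    exact (hasDerivAt_D1 hs0 hsr hsum hy).deriv
  -- value of the bracket for 0 < x ≤ θ
  have hval : ∀ x : ℝ, 0 < x → x ≤ θ →
      x * deriv (deriv C) x + deriv C x = ∑' n : ℕ, ((n:ℝ) + 1) ^ 2 * a (n + 1) * x ^ n := by
    intro x hx0 hxθ
    have hxball : x ∈ Metric.ball (0:ℝ) s := by
      rw [Metric.mem_ball, Real.dist_0_eq_abs, abs_of_pos hx0]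
      linarith
    rw [hderivC x hxball, hderiv2 x hxball]
    have hxr : x < r := lt_of_le_of_lt hxθ hθr
    have hS1 := summable_aux hsum hx0.le hxr 1
    have hS2 := summable_aux hsum hx0.le hxr 2
    have habs : ∀ n : ℕ, |a n| * x ^ n = a n * x ^ n := by
      intro n; rw [abs_of_nonneg (ha n)]
    have ha1 : Summable (fun n : ℕ => (((n:ℝ) + 1) * a (n + 1)) * x ^ n) := by
      have h := (summable_nat_add_iff (f := fun n : ℕ => (n:ℝ) ^ 1 * (|a n| * x ^ n)) 1).2 hS1
      refine (h.mul_left (1/x)).congr fun n => ?_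
      rw [abs_of_nonneg (ha (n+1))]
      push_cast
      field_simp
      ring
    have hx2 : Summable (fun n : ℕ =>
        x * ((((n:ℝ) + 1) * a (n + 1)) * ((n:ℝ) * x ^ (n - 1)))) := by
      have h := (summable_nat_add_iff (f := fun n : ℕ => (n:ℝ) ^ 2 * (|a n| * x ^ n)) 1).2 hS2
      apply Summable.of_nonneg_of_le ?_ ?_ (h.mul_left (1/x))
      · intro n
        have h1 := ha (n + 1)
        have h2 : (0:ℝ) ≤ x ^ (n - 1) := pow_nonneg hx0.le _
        have h3 : (0:ℝ) ≤ (n:ℝ) := Nat.cast_nonneg n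
        positivity
      · intro n
        rw [abs_of_nonneg (ha (n+1))]
        cases n with
        | zero =>
          have h1 := ha 1
          simp
          positivity
        | succ m =>
          have h1 := ha (m + 2)
          have h2 : (0:ℝ) ≤ x ^ m := pow_nonneg hx0.le m
          have e : m + 1 - 1 = m := rfl
          rw [e]
          push_cast
          rw [one_div, ← div_eq_inv_mul, le_div_iff₀ hx0,
            show x ^ (m+1+1) = x ^ m * x * x by ring]
          nlinarith [mul_nonneg (mul_nonneg h1 h2) (mul_self_nonneg x),
            Nat.cast_nonneg (α := ℝ) m,
            mul_nonneg (mul_nonneg (mul_nonneg h1 h2) (mul_self_nonneg x))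
              (Nat.cast_nonneg (α := ℝ) m)]
    rw [← tsum_mul_left, ← Summable.tsum_add hx2 ha1]
    apply tsum_congr
    intro n
    cases n with
    | zero => simp
    | succ m =>
      have e : m + 1 - 1 = m := rfl
      rw [e]
      push_cast
      ring
  -- the series of functions
  set S := {q : ℝ × ℝ | 0 < q.1 ∧ q.1 < q.2} with hSdef
  have hSmeas : MeasurableSet S := measurableSet_S
  set F : ℕ → ℝ × ℝ → ℝ := fun n p => (θ ^ (n+1) * a (n+1) / C θ) *
    (fGE p.1 ((α1 + α3) * ((n:ℝ) + 1)) lam * fGE p.2 (α2 * ((n:ℝ) + 1)) lam) with hFdef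
  -- pointwise identity on S
  have hpoint : EqOn (fun p : ℝ × ℝ => θ / C θ * fGE p.1 (α1 + α3) lam * fGE p.2 α2 lam *
      (θ * K1 α1 α3 α2 lam p.1 p.2 * deriv (deriv C) (θ * K1 α1 α3 α2 lam p.1 p.2) +
        deriv C (θ * K1 α1 α3 α2 lam p.1 p.2))) (fun p => ∑' n : ℕ, F n p) S := by
    intro p hp
    obtain ⟨hp1, hp12⟩ := hp
    have hp2 : 0 < p.2 := hp1.trans hp12
    have hE1 := E_pos hlam hp1
    have hE2 := E_pos hlam hp2
    have hK_pos : 0 < K1 α1 α3 α2 lam p.1 p.2 :=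
      mul_pos (Real.rpow_pos_of_pos hE1 _) (Real.rpow_pos_of_pos hE2 _)
    have hK_le : K1 α1 α3 α2 lam p.1 p.2 ≤ 1 := by
      rw [K1]
      have h1 : (1 - Real.exp (-lam * p.1)) ^ (α1 + α3) ≤ 1 :=
        Real.rpow_le_one hE1.le E_lt_one.le hA.le
      have h2 : (1 - Real.exp (-lam * p.2)) ^ α2 ≤ 1 :=
        Real.rpow_le_one hE2.le E_lt_one.le hα2.le
      have h3 : (0:ℝ) ≤ (1 - Real.exp (-lam * p.1)) ^ (α1 + α3) := (Real.rpow_pos_of_pos hE1 _).le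
      have h4 : (0:ℝ) ≤ (1 - Real.exp (-lam * p.2)) ^ α2 := (Real.rpow_pos_of_pos hE2 _).le
      nlinarith
    have hx0 : 0 < θ * K1 α1 α3 α2 lam p.1 p.2 := mul_pos hθ hK_pos
    have hxθ : θ * K1 α1 α3 α2 lam p.1 p.2 ≤ θ := by nlinarith
    simp only
    rw [hval _ hx0 hxθ, ← tsum_mul_left]
    apply tsum_congr
    intro n
    have key1 : fGE p.1 ((α1 + α3) * ((n:ℝ) + 1)) lam = ((n:ℝ) + 1) *
        (fGE p.1 (α1 + α3) lam * (1 - Real.exp (-lam * p.1)) ^ ((α1 + α3) * (n:ℝ))) := by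
      rw [fGE, fGE, show (α1 + α3) * ((n:ℝ) + 1) - 1 = ((α1 + α3) - 1) + (α1 + α3) * (n:ℝ) by ring,
        Real.rpow_add hE1]
      ring
    have key2 : fGE p.2 (α2 * ((n:ℝ) + 1)) lam = ((n:ℝ) + 1) *
        (fGE p.2 α2 lam * (1 - Real.exp (-lam * p.2)) ^ (α2 * (n:ℝ))) := by
      rw [fGE, fGE, show α2 * ((n:ℝ) + 1) - 1 = (α2 - 1) + α2 * (n:ℝ) by ring,
        Real.rpow_add hE2]
      ring
    have hxn : (θ * K1 α1 α3 α2 lam p.1 p.2) ^ n = θ ^ n *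
        ((1 - Real.exp (-lam * p.1)) ^ ((α1 + α3) * (n:ℝ)) *
         (1 - Real.exp (-lam * p.2)) ^ (α2 * (n:ℝ))) := by
      rw [mul_pow, K1, mul_pow,
        ← Real.rpow_natCast ((1 - Real.exp (-lam * p.1)) ^ (α1 + α3)) n,
        ← Real.rpow_natCast ((1 - Real.exp (-lam * p.2)) ^ α2) n,
        ← Real.rpow_mul hE1.le, ← Real.rpow_mul hE2.le]
    rw [hFdef]
    simp only
    rw [key1, key2, hxn]
    ring
  rw [setIntegral_congr_fun hSmeas hpoint]
  -- termwise integrals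
  have hval2 : ∀ n : ℕ, ∫ p in S, F n p =
      (θ ^ (n+1) * a (n+1) / C θ) * (α2 / (α1 + α2 + α3)) := by
    intro n
    have hn1 : (0:ℝ) < (n:ℝ) + 1 := by positivity
    have hA' : 0 < (α1 + α3) * ((n:ℝ) + 1) := by positivity
    have hB' : 0 < α2 * ((n:ℝ) + 1) := by positivity
    rw [hFdef]
    simp only
    rw [MeasureTheory.integral_const_mul, (int2d hlam hA' hB').2]
    congr 1
    rw [show (α1 + α3) * ((n:ℝ) + 1) + α2 * ((n:ℝ) + 1) = (α1 + α2 + α3) * ((n:ℝ) + 1) by ring,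
      show α2 * ((n:ℝ) + 1) = α2 * ((n:ℝ) + 1) from rfl,
      mul_div_mul_right _ _ hn1.ne']
  have hFnonneg : ∀ n : ℕ, ∀ p ∈ S, 0 ≤ F n p := by
    intro n p hp
    obtain ⟨hp1, hp12⟩ := hp
    have hp2 : 0 < p.2 := hp1.trans hp12
    have hn1 : (0:ℝ) < (n:ℝ) + 1 := by positivity
    have h1 := fGE_nonneg hlam (by positivity : (0:ℝ) < (α1 + α3) * ((n:ℝ) + 1)) hp1
    have h2 := fGE_nonneg hlam (by positivity : (0:ℝ) < α2 * ((n:ℝ) + 1)) hp2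
    have h3 := ha (n+1)
    rw [hFdef]
    simp only
    positivity
  have hint : ∀ n : ℕ, Integrable (F n) (volume.restrict S) := by
    intro n
    have hn1 : (0:ℝ) < (n:ℝ) + 1 := by positivity
    have hA' : 0 < (α1 + α3) * ((n:ℝ) + 1) := by positivity
    have hB' : 0 < α2 * ((n:ℝ) + 1) := by positivity
    exact ((int2d hlam hA' hB').1).const_mul _
  have hsummable : Summable fun n : ℕ => ∫ p in S, ‖F n p‖ := by
    have heq : ∀ n : ℕ, ∫ p in S, ‖F n p‖ =
        (θ ^ (n+1) * a (n+1) / C θ) * (α2 / (α1 + α2 + α3)) := by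
      intro n
      rw [setIntegral_congr_fun hSmeas (fun p hp => Real.norm_of_nonneg (hFnonneg n p hp))]
      exact hval2 n
    have hbase : Summable fun n : ℕ => θ ^ (n+1) * a (n+1) := by
      apply Summable.of_nonneg_of_le (fun n => by have := ha (n+1); positivity)
        (fun n => ?_) hsum1
      have h := ha (n+1)
      have hpow : θ ^ (n+1) ≤ r ^ (n+1) := pow_le_pow_left₀ hθ.le hθr.le _
      rw [abs_of_nonneg h]
      nlinarith [pow_nonneg hθ.le (n+1)]
    have h2 : Summable fun n : ℕ => (θ ^ (n+1) * a (n+1) / C θ) * (α2 / (α1 + α2 + α3)) :=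
      (hbase.mul_right ((α2 / (α1 + α2 + α3)) / C θ)).congr (fun n => by ring)
    exact h2.congr fun n => (heq n).symm
  rw [← integral_tsum_of_summable_integral_norm hint hsummable]
  have : ∑' n : ℕ, ∫ p in S, F n p =
      ∑' n : ℕ, (θ ^ (n+1) * a (n+1) / C θ) * (α2 / (α1 + α2 + α3)) := tsum_congr hval2
  rw [this]
  have hsum_c : ∑' n : ℕ, (θ ^ (n+1) * a (n+1) / C θ) * (α2 / (α1 + α2 + α3)) =
      (∑' n : ℕ, a (n+1) * θ ^ (n+1)) * ((α2 / (α1 + α2 + α3)) / C θ) := by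
    rw [← tsum_mul_right]
    apply tsum_congr
    intro n
    ring
  rw [hsum_c, ← hC θ]
  field_simp
end

section
/- Let (a_n)_{n≥1} be a sequence of nonnegative reals, not all zero, such that C(x) = Σ_{n=1}^∞ a_n x^n converges for all x in (0, s) for some s > 0, and let c = min{ n ≥ 1 : a_n > 0 }. Then for every fixed t ∈ [0, 1], the limit as θ → 0⁺ of C(θ t) / C(θ) exists and equals t^c. (The limiting distribution of the BGEPS family as θ → 0⁺ is the BGE distribution with parameters c·α1, c·α2, c·α3 and λ.) -/
open Real Filter Topology

/-- The limiting distribution of the BGEPS family as `θ → 0⁺` is BGE: if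
`c = min{n ≥ 1 : a_n > 0}`, then for every `t ∈ [0,1]`,
`C(θ t)/C(θ) → t^c` as `θ → 0⁺`. -/
theorem stmt_12 (a : ℕ → ℝ) (ha : ∀ n, 0 ≤ a n)
    (s : ℝ) (hs : 0 < s)
    (hconv : ∀ x : ℝ, 0 < x → x < s → Summable fun n : ℕ => a (n + 1) * x ^ (n + 1))
    (C : ℝ → ℝ) (hC : ∀ x : ℝ, C x = ∑' n : ℕ, a (n + 1) * x ^ (n + 1))
    (c : ℕ) (hc1 : 1 ≤ c) (hac : 0 < a c)
    (hmin : ∀ n : ℕ, 1 ≤ n → n < c → a n = 0)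
    (t : ℝ) (ht : t ∈ Set.Icc (0 : ℝ) 1) :
    Tendsto (fun θ : ℝ => C (θ * t) / C θ) (𝓝[>] (0 : ℝ)) (𝓝 (t ^ c)) := by
  obtain ⟨c', rfl⟩ : ∃ c'', c = c'' + 1 := ⟨c - 1, by omega⟩
  set c := c' + 1 with hcdef
  set g : ℝ → ℝ := fun x => ∑' n : ℕ, a (n + c) * x ^ n with hg
  -- summability of the shifted series
  have hsum1 : ∀ x : ℝ, 0 < x → x < s →
      Summable (fun n : ℕ => a (n + c) * x ^ (n + c)) := by
    intro x hx hxs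
    have h := (summable_nat_add_iff c').mpr (hconv x hx hxs)
    refine h.congr fun n => ?_
    simp [hcdef, add_assoc]
  have hsumg : ∀ x : ℝ, 0 < x → x < s →
      Summable (fun n : ℕ => a (n + c) * x ^ n) := by
    intro x hx hxs
    have h2 := (hsum1 x hx hxs).mul_right ((x ^ c)⁻¹)
    refine h2.congr fun n => ?_
    have hx0 : x ≠ 0 := ne_of_gt hx
    field_simp [pow_add]
    ring
  -- factorization C x = x^c * g x
  have hCx : ∀ x : ℝ, 0 < x → x < s → C x = x ^ c * g x := by
    intro x hx hxs
    rw [hC]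
    have h1 := hconv x hx hxs
    rw [← h1.sum_add_tsum_nat_add c']
    have hz : (∑ i ∈ Finset.range c', a (i + 1) * x ^ (i + 1)) = 0 := by
      refine Finset.sum_eq_zero fun i hi => ?_
      rw [hmin (i + 1) (by omega) (by have := Finset.mem_range.mp hi; omega)]
      ring
    rw [hz, zero_add, hg]
    rw [← tsum_mul_left]
    refine tsum_congr fun n => ?_
    have : n + c' + 1 = n + c := by omega
    rw [this, pow_add]
    ring
  -- continuity of g at 0 from the right: squeeze
  have hx0 : (0 : ℝ) < s / 2 := half_pos hs
  have hx0s : s / 2 < s := by linarith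
  set K : ℝ := (∑' n : ℕ, a (n + 1 + c) * (s / 2) ^ (n + 1)) / (s / 2) with hK
  have htailsum : ∀ x : ℝ, 0 < x → x < s →
      Summable (fun n : ℕ => a (n + 1 + c) * x ^ (n + 1)) := by
    intro x hx hxs
    have h := (summable_nat_add_iff 1).mpr (hsumg x hx hxs)
    refine h.congr fun n => ?_
    have : n + 1 + c = n + c + 1 := by omega
    rw [this]
  have hglow : ∀ x : ℝ, 0 < x → x < s → a c ≤ g x := by
    intro x hx hxs
    have hsplit := Summable.tsum_eq_zero_add (hsumg x hx hxs)
    have : g x = a c + ∑' n : ℕ, a (n + 1 + c) * x ^ (n + 1) := by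
      rw [hg]
      simpa using hsplit
    rw [this]
    have : 0 ≤ ∑' n : ℕ, a (n + 1 + c) * x ^ (n + 1) :=
      tsum_nonneg fun n => mul_nonneg (ha _) (by positivity)
    linarith
  have hghigh : ∀ x : ℝ, 0 < x → x ≤ s / 2 → g x ≤ a c + x * K := by
    intro x hx hxs
    have hxlts : x < s := lt_of_le_of_lt hxs hx0s
    have hsplit : g x = a c + ∑' n : ℕ, a (n + 1 + c) * x ^ (n + 1) := by
      rw [hg]
      simpa using Summable.tsum_eq_zero_add (hsumg x hx hxlts)
    rw [hsplit]
    have hbound : ∑' n : ℕ, a (n + 1 + c) * x ^ (n + 1)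
        ≤ ∑' n : ℕ, x * (a (n + 1 + c) * (s / 2) ^ (n + 1) / (s / 2)) := by
      refine Summable.tsum_le_tsum (fun n => ?_) (htailsum x hx hxlts)
        (((htailsum (s/2) hx0 hx0s).div_const (s/2)).mul_left x)
      have hp : x ^ (n + 1) ≤ x * (s / 2) ^ n := by
        calc x ^ (n + 1) = x * x ^ n := by ring
        _ ≤ x * (s / 2) ^ n := by
            exact mul_le_mul_of_nonneg_left (pow_le_pow_left₀ (le_of_lt hx) hxs n) (le_of_lt hx)
      have : a (n + 1 + c) * x ^ (n + 1) ≤ a (n + 1 + c) * (x * (s / 2) ^ n) :=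
        mul_le_mul_of_nonneg_left hp (ha _)
      calc a (n + 1 + c) * x ^ (n + 1) ≤ a (n + 1 + c) * (x * (s / 2) ^ n) := this
      _ = x * (a (n + 1 + c) * (s / 2) ^ (n + 1) / (s / 2)) := by
          rw [pow_succ]
          field_simp
    have heq : ∑' n : ℕ, x * (a (n + 1 + c) * (s / 2) ^ (n + 1) / (s / 2)) = x * K := by
      rw [tsum_mul_left, hK, ← tsum_div_const]
    linarith [hbound, heq ▸ hbound]
  -- g tends to a c as x → 0⁺
  have hev : ∀ᶠ x : ℝ in 𝓝[>] (0 : ℝ), 0 < x ∧ x < s / 2 := by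
    filter_upwards [Ioo_mem_nhdsGT_of_mem (Set.mem_Ico.mpr ⟨le_refl 0, hx0⟩)] with x hx
    exact ⟨hx.1, hx.2⟩
  have hgtend : Tendsto g (𝓝[>] (0 : ℝ)) (𝓝 (a c)) := by
    have hup : Tendsto (fun x : ℝ => a c + x * K) (𝓝[>] (0 : ℝ)) (𝓝 (a c)) := by
      have : Tendsto (fun x : ℝ => a c + x * K) (𝓝 (0 : ℝ)) (𝓝 (a c + 0 * K)) := by
        exact (tendsto_const_nhds.add ((continuous_id.mul continuous_const).tendsto 0))
      simpa using this.mono_left nhdsWithin_le_nhds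
    refine tendsto_of_tendsto_of_tendsto_of_le_of_le' tendsto_const_nhds hup ?_ ?_
    · filter_upwards [hev] with x hx
      exact hglow x hx.1 (lt_trans hx.2 hx0s)
    · filter_upwards [hev] with x hx
      exact hghigh x hx.1 (le_of_lt hx.2)
  -- main case split on t
  rcases eq_or_lt_of_le ht.1 with h0 | h0
  · -- t = 0
    have hC0 : C 0 = 0 := by rw [hC]; simp
    have : (fun θ : ℝ => C (θ * t) / C θ) = fun _ : ℝ => (0 : ℝ) := by
      funext θ; rw [← h0, mul_zero, hC0, zero_div]
    rw [this, ← h0]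
    simpa [hcdef] using (tendsto_const_nhds : Tendsto (fun _ : ℝ => (0:ℝ)) (𝓝[>] 0) (𝓝 0))
  · -- 0 < t
    have ht1 : t ≤ 1 := ht.2
    have hmap : Tendsto (fun θ : ℝ => θ * t) (𝓝[>] (0 : ℝ)) (𝓝[>] (0 : ℝ)) := by
      refine tendsto_nhdsWithin_of_tendsto_nhds_of_eventually_within _ ?_ ?_
      · have : Tendsto (fun θ : ℝ => θ * t) (𝓝 (0 : ℝ)) (𝓝 (0 * t)) :=
          (continuous_id.mul continuous_const).tendsto 0
        simpa using this.mono_left nhdsWithin_le_nhds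
      · filter_upwards [self_mem_nhdsWithin] with θ hθ
        exact mul_pos hθ h0
    have hgt1 : Tendsto (fun θ : ℝ => g (θ * t)) (𝓝[>] (0 : ℝ)) (𝓝 (a c)) :=
      hgtend.comp hmap
    have key : Tendsto (fun θ : ℝ => t ^ c * (g (θ * t) / g θ)) (𝓝[>] (0 : ℝ))
        (𝓝 (t ^ c * (a c / a c))) :=
      tendsto_const_nhds.mul (hgt1.div hgtend (ne_of_gt hac))
    have hkey : (t : ℝ) ^ c * (a c / a c) = t ^ c := by
      rw [div_self (ne_of_gt hac), mul_one]
    rw [hkey] at key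
    refine key.congr' ?_
    have hevs : ∀ᶠ θ : ℝ in 𝓝[>] (0 : ℝ), 0 < θ ∧ θ < s := by
      filter_upwards [Ioo_mem_nhdsGT_of_mem (Set.mem_Ico.mpr ⟨le_refl 0, hs⟩)] with x hx
      exact ⟨hx.1, hx.2⟩
    filter_upwards [hevs] with θ hθ
    have hθt : 0 < θ * t := mul_pos hθ.1 h0
    have hθts : θ * t < s := lt_of_le_of_lt (mul_le_of_le_one_right (le_of_lt hθ.1) ht1) hθ.2
    rw [hCx θ hθ.1 hθ.2, hCx (θ * t) hθt hθts, mul_pow, mul_assoc,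
      mul_div_mul_left _ _ (pow_ne_zero c (ne_of_gt hθ.1)), mul_div_assoc]
end

section
/- Let 0 < θ < 1 and α1, α2, α3, λ > 0, and set K = (1−e^{−λ y1})^{α1+α3}·(1−e^{−λ y2})^{α2}. For 0 < y1 < y2, the mixed second partial derivative ∂²/∂y1 ∂y2 of the function (y1, y2) ↦ (1−θ) K / (1 − θ K) equals (1−θ) · f_GE(y1; α1+α3, λ) · f_GE(y2; α2, λ) · (1 + θ K) / (1 − θ K)³. (The absolutely continuous density f1 of the bivariate generalized exponential–geometric (BGEG) distribution, i.e. the case C(θ) = θ/(1−θ).) -/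
open Real Filter

/-- `K(y1,y2) = (1-e^{-λ y1})^{α1+α3} (1-e^{-λ y2})^{α2}`. -/
noncomputable def KK (α1 α3 α2 lam y1 y2 : ℝ) : ℝ :=
  (1 - Real.exp (-lam * y1)) ^ (α1 + α3) * (1 - Real.exp (-lam * y2)) ^ α2

lemma base_pos' {lam t : ℝ} (hlam : 0 < lam) (ht : 0 < t) :
    0 < 1 - Real.exp (-lam * t) := by
  have : Real.exp (-lam * t) < 1 := Real.exp_lt_one_iff.mpr (by nlinarith)
  linarith

lemma rpow_pos'' {lam t : ℝ} (α : ℝ) (hlam : 0 < lam) (ht : 0 < t) :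
    0 < (1 - Real.exp (-lam * t)) ^ α :=
  Real.rpow_pos_of_pos (base_pos' hlam ht) α

lemma rpow_lt_one'' {lam t α : ℝ} (hlam : 0 < lam) (ht : 0 < t) (hα : 0 < α) :
    (1 - Real.exp (-lam * t)) ^ α < 1 :=
  Real.rpow_lt_one (le_of_lt (base_pos' hlam ht))
    (by have := Real.exp_pos (-lam * t); linarith) hα

lemma denom_pos {θ A B : ℝ} (hθ0 : 0 < θ) (hθ1 : θ < 1)
    (hA0 : 0 < A) (hA1 : A < 1) (hB0 : 0 < B) (hB1 : B < 1) :
    0 < 1 - θ * (A * B) := by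
  have hAB : A * B < 1 := by nlinarith
  have hABpos : 0 < A * B := mul_pos hA0 hB0
  nlinarith

lemma hasDerivAt_aux (α lam t : ℝ) (hlam : 0 < lam) (ht : 0 < t) :
    HasDerivAt (fun s => (1 - Real.exp (-lam * s)) ^ α) (fGE t α lam) t := by
  have h1 : HasDerivAt (fun s : ℝ => -lam * s) (-lam) t := by
    simpa using (hasDerivAt_id t).const_mul (-lam)
  have h2 : HasDerivAt (fun s : ℝ => Real.exp (-lam * s))
      (Real.exp (-lam * t) * -lam) t := (Real.hasDerivAt_exp (-lam * t)).comp t h1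
  have h3 : HasDerivAt (fun s : ℝ => 1 - Real.exp (-lam * s))
      (-(Real.exp (-lam * t) * -lam)) t := h2.const_sub 1
  have h4 := h3.rpow_const (p := α) (Or.inl (ne_of_gt (base_pos' hlam ht)))
  convert h4 using 1
  unfold fGE; ring

lemma inner_deriv (θ α1 α2 α3 lam t1 y2 : ℝ) (hθ0 : 0 < θ) (hθ1 : θ < 1)
    (hα1 : 0 < α1) (hα2 : 0 < α2) (hα3 : 0 < α3) (hlam : 0 < lam)
    (ht1 : 0 < t1) (hy2 : 0 < y2) :
    deriv (fun t2 : ℝ =>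
        (1 - θ) * KK α1 α3 α2 lam t1 t2 / (1 - θ * KK α1 α3 α2 lam t1 t2)) y2
      = (1 - θ) * (1 - Real.exp (-lam * t1)) ^ (α1 + α3) * fGE y2 α2 lam /
          (1 - θ * ((1 - Real.exp (-lam * t1)) ^ (α1 + α3) *
            (1 - Real.exp (-lam * y2)) ^ α2)) ^ 2 := by
  have hApos : 0 < (1 - Real.exp (-lam * t1)) ^ (α1 + α3) := rpow_pos'' _ hlam ht1
  have hAlt : (1 - Real.exp (-lam * t1)) ^ (α1 + α3) < 1 :=
    rpow_lt_one'' hlam ht1 (by linarith)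
  have hBpos : 0 < (1 - Real.exp (-lam * y2)) ^ α2 := rpow_pos'' _ hlam hy2
  have hBlt : (1 - Real.exp (-lam * y2)) ^ α2 < 1 := rpow_lt_one'' hlam hy2 hα2
  have hD := denom_pos hθ0 hθ1 hApos hAlt hBpos hBlt
  have hb : HasDerivAt (fun t2 => (1 - Real.exp (-lam * t2)) ^ α2)
      (fGE y2 α2 lam) y2 := hasDerivAt_aux α2 lam y2 hlam hy2
  have hN : HasDerivAt (fun t2 : ℝ => (1 - θ) *
      ((1 - Real.exp (-lam * t1)) ^ (α1 + α3) * (1 - Real.exp (-lam * t2)) ^ α2))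
      ((1 - θ) * ((1 - Real.exp (-lam * t1)) ^ (α1 + α3) * fGE y2 α2 lam)) y2 :=
    (hb.const_mul _).const_mul (1 - θ)
  have hDen : HasDerivAt (fun t2 : ℝ => 1 - θ *
      ((1 - Real.exp (-lam * t1)) ^ (α1 + α3) * (1 - Real.exp (-lam * t2)) ^ α2))
      (-(θ * ((1 - Real.exp (-lam * t1)) ^ (α1 + α3) * fGE y2 α2 lam))) y2 :=
    ((hb.const_mul _).const_mul θ).const_sub 1
  have hq := (hN.div hDen (ne_of_gt hD)).deriv
  simp only [KK]
  simp only [Pi.div_def] at hq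
  rw [hq]
  set A := (1 - Real.exp (-lam * t1)) ^ (α1 + α3) with hA
  set B := (1 - Real.exp (-lam * y2)) ^ α2 with hB
  set β := fGE y2 α2 lam with hβ
  have hDne : (1 : ℝ) - θ * (A * B) ≠ 0 := ne_of_gt hD
  field_simp
  ring

/-- Density `f1` of the bivariate generalized exponential–geometric (BGEG) distribution
(the BGEPS case `C(θ) = θ/(1-θ)`): for `0 < y1 < y2`,
`∂²/∂y1∂y2 [(1-θ)K/(1-θK)]
  = (1-θ) f_GE(y1; α1+α3, λ) f_GE(y2; α2, λ) (1+θK)/(1-θK)³`. -/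
theorem stmt_13 (θ : ℝ) (hθ0 : 0 < θ) (hθ1 : θ < 1)
    (α1 α2 α3 lam : ℝ) (hα1 : 0 < α1) (hα2 : 0 < α2) (hα3 : 0 < α3) (hlam : 0 < lam)
    (y1 y2 : ℝ) (hy1 : 0 < y1) (h12 : y1 < y2) :
    deriv (fun t1 : ℝ =>
        deriv (fun t2 : ℝ =>
            (1 - θ) * KK α1 α3 α2 lam t1 t2 / (1 - θ * KK α1 α3 α2 lam t1 t2)) y2) y1 =
      (1 - θ) * fGE y1 (α1 + α3) lam * fGE y2 α2 lam *
        (1 + θ * KK α1 α3 α2 lam y1 y2) / (1 - θ * KK α1 α3 α2 lam y1 y2) ^ 3 := by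
  have hy2 : 0 < y2 := lt_trans hy1 h12
  have hEv : (fun t1 : ℝ =>
      deriv (fun t2 : ℝ =>
        (1 - θ) * KK α1 α3 α2 lam t1 t2 / (1 - θ * KK α1 α3 α2 lam t1 t2)) y2)
      =ᶠ[nhds y1] (fun t1 : ℝ =>
        (1 - θ) * (1 - Real.exp (-lam * t1)) ^ (α1 + α3) * fGE y2 α2 lam /
          (1 - θ * ((1 - Real.exp (-lam * t1)) ^ (α1 + α3) *
            (1 - Real.exp (-lam * y2)) ^ α2)) ^ 2) := by
    filter_upwards [eventually_gt_nhds hy1] with t1 ht1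
    exact inner_deriv θ α1 α2 α3 lam t1 y2 hθ0 hθ1 hα1 hα2 hα3 hlam ht1 hy2
  rw [hEv.deriv_eq]
  have hApos : 0 < (1 - Real.exp (-lam * y1)) ^ (α1 + α3) := rpow_pos'' _ hlam hy1
  have hAlt : (1 - Real.exp (-lam * y1)) ^ (α1 + α3) < 1 :=
    rpow_lt_one'' hlam hy1 (by linarith)
  have hBpos : 0 < (1 - Real.exp (-lam * y2)) ^ α2 := rpow_pos'' _ hlam hy2
  have hBlt : (1 - Real.exp (-lam * y2)) ^ α2 < 1 := rpow_lt_one'' hlam hy2 hα2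
  have hD := denom_pos hθ0 hθ1 hApos hAlt hBpos hBlt
  have ha : HasDerivAt (fun t1 => (1 - Real.exp (-lam * t1)) ^ (α1 + α3))
      (fGE y1 (α1 + α3) lam) y1 := hasDerivAt_aux (α1 + α3) lam y1 hlam hy1
  have hN : HasDerivAt (fun t1 : ℝ =>
      (1 - θ) * (1 - Real.exp (-lam * t1)) ^ (α1 + α3) * fGE y2 α2 lam)
      ((1 - θ) * fGE y1 (α1 + α3) lam * fGE y2 α2 lam) y1 :=
    (ha.const_mul (1 - θ)).mul_const _
  have hDin : HasDerivAt (fun t1 : ℝ =>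
      1 - θ * ((1 - Real.exp (-lam * t1)) ^ (α1 + α3) *
        (1 - Real.exp (-lam * y2)) ^ α2))
      (-(θ * (fGE y1 (α1 + α3) lam * (1 - Real.exp (-lam * y2)) ^ α2))) y1 :=
    ((ha.mul_const _).const_mul θ).const_sub 1
  have hDen : HasDerivAt (fun t1 : ℝ =>
      (1 - θ * ((1 - Real.exp (-lam * t1)) ^ (α1 + α3) *
        (1 - Real.exp (-lam * y2)) ^ α2)) ^ 2)
      ((2 : ℕ) * (1 - θ * ((1 - Real.exp (-lam * y1)) ^ (α1 + α3) *
        (1 - Real.exp (-lam * y2)) ^ α2)) ^ 1 *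
        (-(θ * (fGE y1 (α1 + α3) lam * (1 - Real.exp (-lam * y2)) ^ α2)))) y1 :=
    hDin.pow 2
  have hDen2 : ((1 - θ * ((1 - Real.exp (-lam * y1)) ^ (α1 + α3) *
      (1 - Real.exp (-lam * y2)) ^ α2)) ^ 2 : ℝ) ≠ 0 :=
    pow_ne_zero 2 (ne_of_gt hD)
  have hq := (hN.div hDen hDen2).deriv
  simp only [Pi.div_def] at hq
  rw [hq]
  simp only [KK]
  set A := (1 - Real.exp (-lam * y1)) ^ (α1 + α3) with hA
  set B := (1 - Real.exp (-lam * y2)) ^ α2 with hB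
  set α' := fGE y1 (α1 + α3) lam with hα'
  set β := fGE y2 α2 lam with hβ
  have hDne : (1 : ℝ) - θ * (A * B) ≠ 0 := ne_of_gt hD
  field_simp
  ring
end

section
/- Let θ > 0 and α1, α2, α3, λ > 0, and set K = (1−e^{−λ y1})^{α1+α3}·(1−e^{−λ y2})^{α2}. For 0 < y1 < y2, the mixed second partial derivative ∂²/∂y1 ∂y2 of the function (y1, y2) ↦ (e^{θ K} − 1) / (e^{θ} − 1) equals (θ / (e^{θ} − 1)) · f_GE(y1; α1+α3, λ) · f_GE(y2; α2, λ) · e^{θ K} · (θ K + 1). (The absolutely continuous density f1 of the bivariate generalized exponential–Poisson (BGEP) distribution, i.e. the case C(θ) = e^{θ} − 1.) -/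
open Real Filter

lemma hg_aux (lam a t : ℝ) (hlam : 0 < lam) (ht : 0 < t) :
    HasDerivAt (fun s : ℝ => (1 - Real.exp (-lam * s)) ^ a)
      (a * lam * Real.exp (-lam * t) * (1 - Real.exp (-lam * t)) ^ (a - 1)) t := by
  have h0 : HasDerivAt (fun s : ℝ => -lam * s) (-lam) t := by
    simpa using (hasDerivAt_id t).const_mul (-lam)
  have h1 : HasDerivAt (fun s : ℝ => Real.exp (-lam * s))
      (Real.exp (-lam * t) * (-lam)) t := (Real.hasDerivAt_exp (-lam * t)).comp t h0
  have h2 : HasDerivAt (fun s : ℝ => 1 - Real.exp (-lam * s))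
      (lam * Real.exp (-lam * t)) t := by
    simpa [mul_comm] using h1.const_sub 1
  have hbpos : 0 < 1 - Real.exp (-lam * t) := by
    have : Real.exp (-lam * t) < 1 := by
      rw [Real.exp_lt_one_iff]
      nlinarith
    linarith
  have := h2.rpow_const (p := a) (Or.inl (ne_of_gt hbpos))
  convert this using 1
  ring

/-- Density `f1` of the bivariate generalized exponential–Poisson (BGEP) distribution
(the BGEPS case `C(θ) = e^θ - 1`): for `0 < y1 < y2`,
`∂²/∂y1∂y2 [(e^{θK} - 1)/(e^θ - 1)]
  = (θ/(e^θ - 1)) f_GE(y1; α1+α3, λ) f_GE(y2; α2, λ) e^{θK} (θK + 1)`. -/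
theorem stmt_14 (θ : ℝ) (hθ0 : 0 < θ)
    (α1 α2 α3 lam : ℝ) (hα1 : 0 < α1) (hα2 : 0 < α2) (hα3 : 0 < α3) (hlam : 0 < lam)
    (y1 y2 : ℝ) (hy1 : 0 < y1) (h12 : y1 < y2) :
    deriv (fun t1 : ℝ =>
        deriv (fun t2 : ℝ =>
            (Real.exp (θ * KK α1 α3 α2 lam t1 t2) - 1) / (Real.exp θ - 1)) y2) y1 =
      θ / (Real.exp θ - 1) * fGE y1 (α1 + α3) lam * fGE y2 α2 lam *
        Real.exp (θ * KK α1 α3 α2 lam y1 y2) * (θ * KK α1 α3 α2 lam y1 y2 + 1) := by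
  have hy2 : 0 < y2 := hy1.trans h12
  set a := α1 + α3 with ha
  set b := α2 with hb
  set C := Real.exp θ - 1 with hC
  set v := (1 - Real.exp (-lam * y2)) ^ b with hv
  set v' := b * lam * Real.exp (-lam * y2) * (1 - Real.exp (-lam * y2)) ^ (b - 1) with hv'
  have hg2 := hg_aux lam b y2 hlam hy2
  -- inner derivative, for arbitrary t1
  have hinner : ∀ t1 : ℝ,
      deriv (fun t2 : ℝ =>
        (Real.exp (θ * KK α1 α3 α2 lam t1 t2) - 1) / C) y2 =
      Real.exp (θ * (1 - Real.exp (-lam * t1)) ^ a * v) *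
        (θ * (1 - Real.exp (-lam * t1)) ^ a * v') / C := by
    intro t1
    set U := (1 - Real.exp (-lam * t1)) ^ a with hU
    have h3 : HasDerivAt (fun t2 : ℝ => (Real.exp (θ * KK α1 α3 α2 lam t1 t2) - 1) / C)
        (Real.exp (θ * U * v) * (θ * U * v') / C) y2 := by
      have heq : (fun t2 : ℝ => (Real.exp (θ * KK α1 α3 α2 lam t1 t2) - 1) / C)
          = (fun t2 : ℝ => (Real.exp ((θ * U) * (1 - Real.exp (-lam * t2)) ^ b) - 1) / C) := by
        funext t2; simp only [KK, hU, ha, hb]; ring_nf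
      rw [heq]
      have := (((hg2.const_mul (θ * U)).exp.sub_const 1).div_const C)
      convert this using 1 <;> (simp only [hv, hv']; ring)
    exact h3.deriv
  have hrw : (fun t1 : ℝ => deriv (fun t2 : ℝ =>
        (Real.exp (θ * KK α1 α3 α2 lam t1 t2) - 1) / (Real.exp θ - 1)) y2)
      = (fun t1 : ℝ => Real.exp ((θ * v) * (1 - Real.exp (-lam * t1)) ^ a) *
        ((θ * v') * (1 - Real.exp (-lam * t1)) ^ a) / C) := by
    funext t1
    rw [← hC, hinner t1]
    ring_nf
  rw [hrw]
  -- outer derivative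
  have hg1 := hg_aux lam a y1 hlam hy1
  set U := (1 - Real.exp (-lam * y1)) ^ a with hU
  set U' := a * lam * Real.exp (-lam * y1) * (1 - Real.exp (-lam * y1)) ^ (a - 1) with hU'
  have hout := (((hg1.const_mul (θ * v)).exp.mul (hg1.const_mul (θ * v'))).div_const C)
  rw [(show HasDerivAt (fun t1 : ℝ => Real.exp ((θ * v) * (1 - Real.exp (-lam * t1)) ^ a) *
      ((θ * v') * (1 - Real.exp (-lam * t1)) ^ a) / C) _ y1 from hout).deriv, ← hU]
  have hK : θ * KK α1 α3 α2 lam y1 y2 = (θ * v) * U := by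
    simp only [KK, hv, hU]; ring
  rw [hK]
  simp only [fGE, ← hU, ← hU', ← hv']
  have hCne : C ≠ 0 := by
    have : (1:ℝ) < Real.exp θ := by rw [Real.one_lt_exp_iff]; exact hθ0
    simp only [hC]; linarith
  field_simp
end

section
/- Let a1, a2, a3, λ > 0. Then ∫_0^∞ f_GE(z2; a2, λ) · ( ∫_0^{z2} f_GE(z3; a3, λ) · (1−e^{−λ z3})^{a1} dz3 ) dz2 = a2 a3 / ( (a1+a3)(a1+a2+a3) ). (For independent random variables Z1 ~ GE(a1, λ), Z2 ~ GE(a2, λ), Z3 ~ GE(a3, λ), this is P(Z1 < Z3 < Z2); it yields the E-step probability u2 = α3/(α1+α3) in the EM algorithm.) -/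
open Real Filter MeasureTheory intervalIntegral

namespace Stmt17Aux

lemma base_pos {lam z : ℝ} (hlam : 0 < lam) (hz : 0 < z) :
    0 < 1 - Real.exp (-lam * z) := by
  have : Real.exp (-lam * z) < 1 := by
    rw [Real.exp_lt_one_iff]; nlinarith
  linarith

lemma hasDerivAt_F (c lam : ℝ) (hc : c ≠ 0) (hlam : 0 < lam) {z : ℝ} (hz : 0 < z) :
    HasDerivAt (fun x => (1 - Real.exp (-lam * x)) ^ c / c)
      (lam * Real.exp (-lam * z) * (1 - Real.exp (-lam * z)) ^ (c - 1)) z := by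
  have hu : 0 < 1 - Real.exp (-lam * z) := base_pos hlam hz
  have h1 : HasDerivAt (fun x : ℝ => -lam * x) (-lam) z := by
    simpa using (hasDerivAt_id z).const_mul (-lam)
  have h2 : HasDerivAt (fun x : ℝ => Real.exp (-lam * x))
      (Real.exp (-lam * z) * (-lam)) z := (Real.hasDerivAt_exp _).comp z h1
  have h3 : HasDerivAt (fun x : ℝ => 1 - Real.exp (-lam * x))
      (lam * Real.exp (-lam * z)) z := by
    have := (hasDerivAt_const z (1 : ℝ)).sub h2
    exact this.congr_deriv (by ring)
  have h4 := (Real.hasDerivAt_rpow_const (x := 1 - Real.exp (-lam * z)) (p := c)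
    (Or.inl (ne_of_gt hu))).comp z h3
  have h5 := h4.div_const c
  refine h5.congr_deriv ?_
  field_simp

lemma contF (c lam : ℝ) (hc : 0 ≤ c) :
    Continuous (fun x : ℝ => (1 - Real.exp (-lam * x)) ^ c / c) := by
  apply Continuous.div_const
  apply Continuous.rpow_const
  · continuity
  · exact fun x => Or.inr hc

lemma keyA (c lam t : ℝ) (hc : 0 < c) (hlam : 0 < lam) (ht : 0 ≤ t) :
    ∫ z in (0 : ℝ)..t, lam * Real.exp (-lam * z) * (1 - Real.exp (-lam * z)) ^ (c - 1) =
      (1 - Real.exp (-lam * t)) ^ c / c := by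
  have hderiv : ∀ x ∈ Set.Ioo (0 : ℝ) t,
      HasDerivAt (fun x => (1 - Real.exp (-lam * x)) ^ c / c)
        (lam * Real.exp (-lam * x) * (1 - Real.exp (-lam * x)) ^ (c - 1)) x :=
    fun x hx => hasDerivAt_F c lam (ne_of_gt hc) hlam hx.1
  have hpos : ∀ x ∈ Set.Ioo (0 : ℝ) t,
      0 ≤ lam * Real.exp (-lam * x) * (1 - Real.exp (-lam * x)) ^ (c - 1) := by
    intro x hx
    have := base_pos hlam hx.1
    positivity
  have hint : IntervalIntegrable
      (fun z => lam * Real.exp (-lam * z) * (1 - Real.exp (-lam * z)) ^ (c - 1))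
      volume 0 t := by
    apply intervalIntegrable_deriv_of_nonneg ((contF c lam hc.le).continuousOn)
    · intro x hx
      rw [min_eq_left ht, max_eq_right ht] at hx
      exact hderiv x hx
    · intro x hx
      rw [min_eq_left ht, max_eq_right ht] at hx
      exact hpos x hx
  have := intervalIntegral.integral_eq_sub_of_hasDeriv_right_of_le ht
    ((contF c lam hc.le).continuousOn)
    (fun x hx => (hderiv x hx).hasDerivWithinAt) hint
  rw [this]
  simp [Real.zero_rpow (ne_of_gt hc)]

lemma inner_int (a1 a3 lam t : ℝ) (ha1 : 0 < a1) (ha3 : 0 < a3) (hlam : 0 < lam)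
    (ht : 0 < t) :
    ∫ z in (0 : ℝ)..t, fGE z a3 lam * (1 - Real.exp (-lam * z)) ^ a1 =
      a3 / (a1 + a3) * (1 - Real.exp (-lam * t)) ^ (a1 + a3) := by
  have hcong : ∀ᵐ z ∂(volume : Measure ℝ), z ∈ Set.uIoc (0 : ℝ) t →
      fGE z a3 lam * (1 - Real.exp (-lam * z)) ^ a1 =
        a3 * (lam * Real.exp (-lam * z) *
          (1 - Real.exp (-lam * z)) ^ ((a1 + a3) - 1)) := by
    refine Filter.Eventually.of_forall (fun z hz => ?_)
    rw [Set.uIoc_of_le ht.le] at hz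
    have hu : 0 < 1 - Real.exp (-lam * z) := base_pos hlam hz.1
    unfold fGE
    rw [show a1 + a3 - 1 = (a3 - 1) + a1 by ring, Real.rpow_add hu (a3 - 1) a1]
    ring
  rw [intervalIntegral.integral_congr_ae hcong, intervalIntegral.integral_const_mul,
    keyA (a1 + a3) lam t (by linarith) hlam ht.le]
  ring

end Stmt17Aux

open Stmt17Aux in
/-- For independent `Z1 ~ GE(a1,λ)`, `Z2 ~ GE(a2,λ)`, `Z3 ~ GE(a3,λ)`:
`P(Z1 < Z3 < Z2) = ∫_0^∞ f_GE(z2; a2, λ) (∫_0^{z2} f_GE(z3; a3, λ)(1-e^{-λ z3})^{a1} dz3) dz2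
  = a2 a3 / ((a1+a3)(a1+a2+a3))`. -/
theorem stmt_17 (a1 a2 a3 lam : ℝ) (ha1 : 0 < a1) (ha2 : 0 < a2) (ha3 : 0 < a3)
    (hlam : 0 < lam) :
    ∫ z2 in Set.Ioi (0 : ℝ),
        fGE z2 a2 lam *
          ∫ z3 in (0 : ℝ)..z2, fGE z3 a3 lam * (1 - Real.exp (-lam * z3)) ^ a1 =
      a2 * a3 / ((a1 + a3) * (a1 + a2 + a3)) := by
  set d := a1 + a2 + a3 with hd
  have hdpos : 0 < d := by positivity
  have hstep : ∀ z ∈ Set.Ioi (0 : ℝ),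
      fGE z a2 lam * ∫ z3 in (0 : ℝ)..z, fGE z3 a3 lam * (1 - Real.exp (-lam * z3)) ^ a1 =
        (a2 * a3 / (a1 + a3)) *
          (lam * Real.exp (-lam * z) * (1 - Real.exp (-lam * z)) ^ (d - 1)) := by
    intro z hz
    have hz0 : 0 < z := hz
    have hu : 0 < 1 - Real.exp (-lam * z) := base_pos hlam hz0
    rw [inner_int a1 a3 lam z ha1 ha3 hlam hz0]
    unfold fGE
    rw [show d - 1 = (a2 - 1) + (a1 + a3) by rw [hd]; ring, Real.rpow_add hu (a2 - 1) (a1 + a3)]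
    ring
  rw [MeasureTheory.setIntegral_congr_fun measurableSet_Ioi hstep,
    MeasureTheory.integral_const_mul]
  have hcont : ContinuousWithinAt (fun x : ℝ => (1 - Real.exp (-lam * x)) ^ d / d)
      (Set.Ici 0) 0 := (contF d lam hdpos.le).continuousWithinAt
  have hderiv : ∀ x ∈ Set.Ioi (0 : ℝ),
      HasDerivAt (fun x => (1 - Real.exp (-lam * x)) ^ d / d)
        (lam * Real.exp (-lam * x) * (1 - Real.exp (-lam * x)) ^ (d - 1)) x :=
    fun x hx => hasDerivAt_F d lam (ne_of_gt hdpos) hlam hx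
  have hpos : ∀ x ∈ Set.Ioi (0 : ℝ),
      0 ≤ lam * Real.exp (-lam * x) * (1 - Real.exp (-lam * x)) ^ (d - 1) := by
    intro x hx
    have := base_pos hlam hx
    positivity
  have htends : Tendsto (fun x : ℝ => (1 - Real.exp (-lam * x)) ^ d / d) atTop
      (nhds (1 / d)) := by
    have h1 : Tendsto (fun x : ℝ => -lam * x) atTop atBot := by
      apply Filter.Tendsto.const_mul_atTop_of_neg (by linarith : -lam < 0) tendsto_id
    have h2 : Tendsto (fun x : ℝ => Real.exp (-lam * x)) atTop (nhds 0) :=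
      Real.tendsto_exp_atBot.comp h1
    have h3 : Tendsto (fun x : ℝ => 1 - Real.exp (-lam * x)) atTop (nhds 1) := by
      simpa using (tendsto_const_nhds (x := (1 : ℝ))).sub h2
    have h4 : Tendsto (fun x : ℝ => (1 - Real.exp (-lam * x)) ^ d) atTop (nhds 1) := by
      have hc : ContinuousAt (fun y : ℝ => y ^ d) 1 :=
        Real.continuousAt_rpow_const 1 d (Or.inl one_ne_zero)
      simpa [Real.one_rpow, Function.comp_def] using hc.tendsto.comp h3
    simpa using h4.div_const d
  have := MeasureTheory.integral_Ioi_of_hasDerivAt_of_nonneg hcont hderiv hpos htends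
  rw [this]
  have h0 : (1 : ℝ) - Real.exp (-lam * 0) = 0 := by simp
  rw [h0, Real.zero_rpow (ne_of_gt hdpos)]
  field_simp
  norm_num
end
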